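/- arXiv:0812.0540 — 4 statements merged into one kernel-verified Lean document; each statement's English description precedes it below -/
import Mathlib

section
/- Every natural number n can be written as a sum of two squares plus one triangular number: there exist natural numbers x, y, z with n = x² + y² + t_z. -/
/-! Auxiliary development: every positive integer ≡ 1 (mod 4) is a sum of three squares
(via Dirichlet's theorem, quadratic reciprocity and reduction of quadratic forms),
and the consequent representation n = x² + y² + t_z. -/

/-- Choose a shear so that the off-diagonal coefficient becomes small. -/
lemma shear_exists (A B : ℤ) (hA : 1 ≤ A) : ∃ t : ℤ, |2*(B - t*A)| ≤ A := by
  have hA0 : A ≠ 0 := by omega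
  obtain ⟨q, r, h0, h1, hqr⟩ : ∃ q r : ℤ, 0 ≤ r ∧ r < A ∧ B = A*q + r :=
    ⟨B / A, B % A, Int.emod_nonneg B hA0, Int.emod_lt_of_pos B (by omega),
      (Int.mul_ediv_add_emod B A).symm⟩
  rcases le_or_gt (2 * r) A with h | h
  · refine ⟨q, ?_⟩
    have e : 2*(B - q*A) = 2*r := by linear_combination 2*hqr
    rw [e, abs_le]; omega
  · refine ⟨q + 1, ?_⟩
    have e : 2*(B - (q+1)*A) = 2*r - 2*A := by linear_combination 2*hqr
    rw [e, abs_le]; omega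

section Binary

/-- Reduction theory for positive-definite integral binary quadratic forms
(with even middle coefficient). -/
lemma bin_reduce (a b c : ℤ)
    (hpos : ∀ y z : ℤ, ¬(y = 0 ∧ z = 0) → 1 ≤ a*y^2 + 2*b*y*z + c*z^2) :
    ∃ p q r s A B C : ℤ, p*s - q*r = 1 ∧
      (∀ Y Z : ℤ, a*(p*Y+q*Z)^2 + 2*b*(p*Y+q*Z)*(r*Y+s*Z) + c*(r*Y+s*Z)^2
        = A*Y^2 + 2*B*Y*Z + C*Z^2) ∧
      1 ≤ A ∧ A ≤ C ∧ |2*B| ≤ A ∧ A*C - B^2 = a*c - b^2 ∧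
      (∀ y z : ℤ, ¬(y = 0 ∧ z = 0) → A ≤ a*y^2 + 2*b*y*z + c*z^2) := by
  set f : ℤ → ℤ → ℤ := fun y z => a*y^2 + 2*b*y*z + c*z^2 with hf
  have ha1 : 1 ≤ a := by
    have := hpos 1 0 (by simp)
    linarith
  have hSne : ∃ k : ℕ, ∃ y z : ℤ, ¬(y = 0 ∧ z = 0) ∧ f y z = (k : ℤ) := by
    refine ⟨a.toNat, 1, 0, by simp, ?_⟩
    have : ((a.toNat : ℤ)) = a := Int.toNat_of_nonneg (by linarith)
    rw [this]; simp only [hf]; ring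
  set S : Set ℕ := {k : ℕ | ∃ y z : ℤ, ¬(y = 0 ∧ z = 0) ∧ f y z = (k : ℤ)} with hS
  have hne : S.Nonempty := hSne
  set m : ℕ := sInf S with hm
  obtain ⟨y₀, z₀, hv0, hfv0⟩ : ∃ y z : ℤ, ¬(y = 0 ∧ z = 0) ∧ f y z = (m : ℤ) :=
    Nat.sInf_mem hne
  have hmin : ∀ y z : ℤ, ¬(y = 0 ∧ z = 0) → (m : ℤ) ≤ f y z := by
    intro y z hyz
    have h1 : 1 ≤ f y z := hpos y z hyz
    have hmem : (f y z).toNat ∈ S := ⟨y, z, hyz, by omega⟩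
    have := Nat.sInf_le hmem
    omega
  have hm1 : 1 ≤ (m : ℤ) := hfv0 ▸ hpos y₀ z₀ hv0
  -- primitivity
  have hg : Int.gcd y₀ z₀ = 1 := by
    set g : ℕ := Int.gcd y₀ z₀ with hgdef
    have hg0 : g ≠ 0 := by
      intro h
      exact hv0 ⟨Int.gcd_eq_zero_iff.mp h |>.1, Int.gcd_eq_zero_iff.mp h |>.2⟩
    obtain ⟨y₁, hy₁⟩ : (g : ℤ) ∣ y₀ := Int.gcd_dvd_left _ _
    obtain ⟨z₁, hz₁⟩ : (g : ℤ) ∣ z₀ := Int.gcd_dvd_right _ _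
    have hv1 : ¬(y₁ = 0 ∧ z₁ = 0) := by
      rintro ⟨rfl, rfl⟩; exact hv0 ⟨by simp [hy₁], by simp [hz₁]⟩
    have hfv1 : (m : ℤ) = (g:ℤ)^2 * f y₁ z₁ := by
      rw [← hfv0, hy₁, hz₁]; ring
    have h1 := hmin y₁ z₁ hv1
    have hgg : (1:ℤ) ≤ f y₁ z₁ := hpos _ _ hv1
    by_contra hne1
    have h2 : (2:ℤ) ≤ (g:ℤ) := by
      have : 2 ≤ g := by omega
      exact_mod_cast this
    nlinarith [sq_nonneg ((g:ℤ) - 2)]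
  -- Bezout
  obtain ⟨u, v, huv⟩ : ∃ u v : ℤ, y₀ * u + z₀ * v = 1 := by
    refine ⟨Int.gcdA y₀ z₀, Int.gcdB y₀ z₀, ?_⟩
    have := Int.gcd_eq_gcd_ab y₀ z₀
    rw [hg] at this
    exact_mod_cast this.symm
  -- first change of basis, columns (y₀,z₀) and (-v,u)
  set B₀ : ℤ := a*y₀*(-v) + b*(y₀*u + z₀*(-v)) + c*z₀*u with hB₀
  obtain ⟨t, ht⟩ := shear_exists (m : ℤ) B₀ hm1
  -- second column after shear
  set q : ℤ := -v - t*y₀ with hq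
  set s : ℤ := u - t*z₀ with hs
  have hdet1 : y₀*s - q*z₀ = 1 := by simp only [hq, hs]; linear_combination huv
  set B : ℤ := B₀ - t*(m:ℤ) with hB
  set C : ℤ := f q s with hC
  have hCv : ¬(q = 0 ∧ s = 0) := by
    rintro ⟨h1, h2⟩; rw [h1, h2] at hdet1; simp at hdet1
  have hC1 : (m : ℤ) ≤ C := hmin q s hCv
  refine ⟨y₀, q, z₀, s, (m:ℤ), B, C, hdet1, ?_, hm1, hC1, ?_, ?_, hmin⟩
  · intro Y Z
    simp only [hC, hf, hB, hB₀, hq, hs]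
    rw [← hfv0]; simp only [hf]; ring
  · calc |2*B| = |2*(B₀ - t*(m:ℤ))| := by rw [hB]
    _ ≤ (m:ℤ) := ht
  · have hid : (m:ℤ)*C - B^2 = (a*c - b^2) * (y₀*s - q*z₀)^2 := by
      simp only [hC, hf, hB, hB₀, hq, hs]; rw [← hfv0]; simp only [hf]; ring
    rw [hid, hdet1]; ring

/-- A positive-definite integral binary form of determinant 1 is a sum of two
squares of linear forms. -/
lemma bin_one (a b c : ℤ)
    (hpos : ∀ y z : ℤ, ¬(y = 0 ∧ z = 0) → 1 ≤ a*y^2 + 2*b*y*z + c*z^2)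
    (hdet : a*c - b^2 = 1) :
    ∃ p q r s : ℤ, ∀ y z : ℤ,
      a*y^2 + 2*b*y*z + c*z^2 = (p*y + q*z)^2 + (r*y + s*z)^2 := by
  obtain ⟨p, q, r, s, A, B, C, huni, hid, hA1, hAC, hB, hdet', -⟩ := bin_reduce a b c hpos
  rw [hdet] at hdet'
  have hA : A = 1 := by nlinarith [abs_nonneg (2*B), sq_abs (2*B), abs_le.mp hB]
  have hBz : B = 0 := by
    rw [hA] at hB; have := abs_le.mp hB; omega
  have hCz : C = 1 := by rw [hA, hBz] at hdet'; linarith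
  rw [hA, hBz, hCz] at hid
  refine ⟨s, -q, -r, p, fun y z => ?_⟩
  have h1 : p*(s*y - q*z) + q*(p*z - r*y) = y := by linear_combination y * huni
  have h2 : r*(s*y - q*z) + s*(p*z - r*y) = z := by linear_combination z * huni
  have := hid (s*y - q*z) (p*z - r*y)
  rw [h1, h2] at this
  calc a*y^2 + 2*b*y*z + c*z^2 = 1*(s*y - q*z)^2 + 2*0*(s*y-q*z)*(p*z-r*y) + 1*(p*z - r*y)^2 := this
  _ = (s*y + -q*z)^2 + (-r*y + p*z)^2 := by ring

end Binary


/-- Any primitive vector in `ℤ³` is the first column of a matrix of determinant 1. -/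
lemma ext3 (x y z : ℤ) (h : Int.gcd (Int.gcd x y : ℤ) z = 1) :
    ∃ m12 m13 m22 m23 m32 m33 : ℤ,
      x*(m22*m33 - m23*m32) - m12*(y*m33 - m23*z) + m13*(y*m32 - m22*z) = 1 := by
  set g : ℕ := Int.gcd x y with hg
  rcases Nat.eq_zero_or_pos g with hg0 | hgpos
  · -- x = y = 0, z = ±1
    have hx : x = 0 := (Int.gcd_eq_zero_iff.mp hg0).1
    have hy : y = 0 := (Int.gcd_eq_zero_iff.mp hg0).2
    rw [hg0] at h
    simp only [Nat.cast_zero] at h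
    have hz : z = 1 ∨ z = -1 := by
      have : z.natAbs = 1 := by simpa [Int.gcd] using h
      omega
    rcases hz with rfl | rfl
    · exact ⟨1, 0, 0, 1, 0, 0, by ring⟩
    · exact ⟨1, 0, 0, -1, 0, 0, by ring⟩
  · -- Bezout twice
    obtain ⟨a, b, hab⟩ : ∃ a b : ℤ, x * a + y * b = (g : ℤ) := by
      refine ⟨Int.gcdA x y, Int.gcdB x y, ?_⟩
      exact (Int.gcd_eq_gcd_ab x y).symm
    obtain ⟨c, d, hcd⟩ : ∃ c d : ℤ, (g:ℤ) * c + z * d = 1 := by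
      refine ⟨Int.gcdA (g:ℤ) z, Int.gcdB (g:ℤ) z, ?_⟩
      have := (Int.gcd_eq_gcd_ab (g:ℤ) z).symm
      rw [h] at this
      exact_mod_cast this
    obtain ⟨x', hx'⟩ : (g : ℤ) ∣ x := Int.gcd_dvd_left _ _
    obtain ⟨y', hy'⟩ : (g : ℤ) ∣ y := Int.gcd_dvd_right _ _
    have hab' : x' * a + y' * b = 1 := by
      have hgne : (g : ℤ) ≠ 0 := by exact_mod_cast hgpos.ne'
      have : (g:ℤ) * (x' * a + y' * b) = (g:ℤ) * 1 := by
        rw [hx', hy'] at hab; linear_combination hab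
      exact mul_left_cancel₀ hgne this
    -- columns: (x,y,z), (-b, a, 0), (-d*x', -d*y', c)
    refine ⟨-b, -d*x', a, -d*y', 0, c, ?_⟩
    have hxg : x = (g:ℤ) * x' := hx'
    have hyg : y = (g:ℤ) * y' := hy'
    rw [hxg, hyg]
    linear_combination (c*(g:ℤ) + d*z) * hab' + hcd



/-! ### small arithmetic helpers -/

lemma primitive_min_helper {M G F : ℤ} (hle : M ≤ F) (h2 : 2 ≤ G)
    (heq : M = G^2 * F) (hF : 1 ≤ F) : False := by
  have h4 : 4 ≤ G^2 := by nlinarith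
  have h5 : 4*F ≤ G^2*F := mul_le_mul_of_nonneg_right h4 (by linarith)
  linarith

lemma kpos_helper {M K R : ℤ} (hm : 1 ≤ M) (heq : M^2 * K = M * R) (hge : M ≤ R) :
    1 ≤ K := by nlinarith

lemma hk3_helper {A B C M : ℤ} (h1 : 1 ≤ A) (hAC : A ≤ C) (hB : |2*B| ≤ A)
    (hdet : A*C - B^2 = M) : 3*A^2 ≤ 4*M := by
  have habs := abs_le.mp hB
  have hsq : (2*B)^2 ≤ A^2 := sq_le_sq' (by linarith) habs.2
  nlinarith

lemma endgame_helper {M A : ℤ} (hm : 1 ≤ M) (hA : 1 ≤ A) (h1 : 3*A^2 ≤ 4*M)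
    (h2 : 3*M^2 ≤ 4*A) : M = 1 := by
  have h9 : (3*M^2)*(3*M^2) ≤ (4*A)*(4*A) := mul_self_le_mul_self (by positivity) h2
  have h6 : 27*M^4 ≤ 64*M := by nlinarith
  nlinarith [sq_nonneg (M - 1), sq_nonneg (M + 1), sq_nonneg (M^2 - 1)]

/-! ### phase 1: the minimum of a det-1 positive ternary form is 1 -/

lemma tern_min_one (M B' C' D' E' G' : ℤ) (hm1 : 1 ≤ M)
    (hmin' : ∀ X Y Z : ℤ, ¬(X = 0 ∧ Y = 0 ∧ Z = 0) →
      M ≤ M*X^2 + B'*Y^2 + C'*Z^2 + 2*D'*X*Y + 2*E'*X*Z + 2*G'*Y*Z)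
    (hdetT : M*(B'*C' - G'^2) - D'*(D'*C' - G'*E') + E'*(D'*G' - B'*E') = 1) :
    M = 1 := by
  have hKpos : ∀ Y Z : ℤ, ¬(Y = 0 ∧ Z = 0) →
      1 ≤ (M*B' - D'^2)*Y^2 + 2*(M*G' - D'*E')*Y*Z + (M*C' - E'^2)*Z^2 := by
    intro Y Z hYZ
    have hnz : ¬((-(D'*Y + E'*Z)) = 0 ∧ M*Y = 0 ∧ M*Z = 0) := by
      rintro ⟨h1, h2, h3⟩
      refine hYZ ⟨?_, ?_⟩
      · rcases mul_eq_zero.mp h2 with h | h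
        · omega
        · exact h
      · rcases mul_eq_zero.mp h3 with h | h
        · omega
        · exact h
    have himg := hmin' (-(D'*Y + E'*Z)) (M*Y) (M*Z) hnz
    refine kpos_helper hm1 ?_ himg
    ring
  have hdetK : (M*B' - D'^2)*(M*C' - E'^2) - (M*G' - D'*E')^2 = M := by
    linear_combination M * hdetT
  obtain ⟨pk, qk, rk, sk, Ak, Bk, Ck, hkuni, hkid, hk1, hkAC, hkB, hkdet, hkmin⟩ :=
    bin_reduce _ _ _ hKpos
  have hk3 : 3*Ak^2 ≤ 4*M := hk3_helper hk1 hkAC hkB (hkdet.trans hdetK)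
  have hkval : (M*B' - D'^2)*pk^2 + 2*(M*G' - D'*E')*pk*rk + (M*C' - E'^2)*rk^2 = Ak := by
    linear_combination hkid 1 0
  have hpkrk : ¬(pk = 0 ∧ rk = 0) := by
    rintro ⟨h1, h2⟩
    rw [h1, h2] at hkuni
    simp at hkuni
  obtain ⟨t, ht⟩ := shear_exists M (D'*pk + E'*rk) hm1
  have himg2 := hmin' (-t) pk rk (by rintro ⟨h1, h2, h3⟩; exact hpkrk ⟨h2, h3⟩)
  have hm3 : 3*M^2 ≤ 4*Ak := by
    have habs2 := abs_le.mp ht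
    have hsq : (2*(D'*pk + E'*rk - t*M))^2 ≤ M^2 :=
      sq_le_sq' (by linarith [habs2.1]) (by linarith [habs2.2])
    have hid2 : M * (M*(-t)^2 + B'*pk^2 + C'*rk^2 + 2*D'*(-t)*pk + 2*E'*(-t)*rk
          + 2*G'*pk*rk)
        = (D'*pk + E'*rk - t*M)^2 + ((M*B' - D'^2)*pk^2
            + 2*(M*G' - D'*E')*pk*rk + (M*C' - E'^2)*rk^2) := by ring
    have h5 : M*M ≤ M * (M*(-t)^2 + B'*pk^2 + C'*rk^2 + 2*D'*(-t)*pk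
          + 2*E'*(-t)*rk + 2*G'*pk*rk) :=
      mul_le_mul_of_nonneg_left himg2 (by linarith)
    nlinarith [hid2, h5, hsq, hkval]
  exact endgame_helper hm1 hk1 hk3 hm3

/-! ### phase 2: completing the square when the minimum is 1 -/

lemma tern_complete (B' C' D' E' G' : ℤ)
    (hpos' : ∀ X Y Z : ℤ, ¬(X = 0 ∧ Y = 0 ∧ Z = 0) →
      1 ≤ 1*X^2 + B'*Y^2 + C'*Z^2 + 2*D'*X*Y + 2*E'*X*Z + 2*G'*Y*Z)
    (hdetT : 1*(B'*C' - G'^2) - D'*(D'*C' - G'*E') + E'*(D'*G' - B'*E') = 1) :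
    ∃ p q r s : ℤ, ∀ X Y Z : ℤ,
      1*X^2 + B'*Y^2 + C'*Z^2 + 2*D'*X*Y + 2*E'*X*Z + 2*G'*Y*Z
        = (X + D'*Y + E'*Z)^2 + (p*Y + q*Z)^2 + (r*Y + s*Z)^2 := by
  have hK'pos : ∀ Y Z : ℤ, ¬(Y = 0 ∧ Z = 0) →
      1 ≤ (B' - D'^2)*Y^2 + 2*(G' - D'*E')*Y*Z + (C' - E'^2)*Z^2 := by
    intro Y Z hYZ
    have himg := hpos' (-(D'*Y + E'*Z)) Y Z (by rintro ⟨h1, h2, h3⟩; exact hYZ ⟨h2, h3⟩)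
    have hidp : (1:ℤ)*(-(D'*Y + E'*Z))^2 + B'*Y^2 + C'*Z^2 + 2*D'*(-(D'*Y + E'*Z))*Y
          + 2*E'*(-(D'*Y + E'*Z))*Z + 2*G'*Y*Z
        = (B' - D'^2)*Y^2 + 2*(G' - D'*E')*Y*Z + (C' - E'^2)*Z^2 := by ring
    linarith only [himg, hidp]
  have hdetK' : (B' - D'^2)*(C' - E'^2) - (G' - D'*E')^2 = 1 := by
    linear_combination hdetT
  obtain ⟨p, q, r, s, hbin⟩ := bin_one _ _ _ hK'pos hdetK'
  exact ⟨p, q, r, s, fun X Y Z => by linear_combination hbin Y Z⟩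



set_option maxHeartbeats 1000000 in
/-- A positive definite integral ternary quadratic form of determinant 1 is a sum of
three squares of integral linear forms. -/
theorem tern_sos (a b c d e f : ℤ)
    (hpos : ∀ x y z : ℤ, ¬(x = 0 ∧ y = 0 ∧ z = 0) →
      1 ≤ a*x^2 + b*y^2 + c*z^2 + 2*d*x*y + 2*e*x*z + 2*f*y*z)
    (hdet : a*(b*c - f^2) - d*(d*c - f*e) + e*(d*f - b*e) = 1) :
    ∃ u1 u2 u3 v1 v2 v3 w1 w2 w3 : ℤ, ∀ x y z : ℤ,
      a*x^2 + b*y^2 + c*z^2 + 2*d*x*y + 2*e*x*z + 2*f*y*z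
        = (u1*x + u2*y + u3*z)^2 + (v1*x + v2*y + v3*z)^2 + (w1*x + w2*y + w3*z)^2 := by
  have ha1 : 1 ≤ a := by have := hpos 1 0 0 (by simp); linarith only [this]
  have hSne : ∃ k : ℕ, ∃ x y z : ℤ, ¬(x = 0 ∧ y = 0 ∧ z = 0) ∧
      a*x^2 + b*y^2 + c*z^2 + 2*d*x*y + 2*e*x*z + 2*f*y*z = (k : ℤ) := by
    refine ⟨a.toNat, 1, 0, 0, by simp, ?_⟩
    have h' : ((a.toNat : ℤ)) = a := Int.toNat_of_nonneg (by linarith only [ha1])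
    rw [h']; ring
  set S : Set ℕ := {k : ℕ | ∃ x y z : ℤ, ¬(x = 0 ∧ y = 0 ∧ z = 0) ∧
      a*x^2 + b*y^2 + c*z^2 + 2*d*x*y + 2*e*x*z + 2*f*y*z = (k : ℤ)} with hS
  have hne : S.Nonempty := hSne
  set m : ℕ := sInf S with hmdef
  obtain ⟨x₀, y₀, z₀, hv0, hfv0⟩ : ∃ x y z : ℤ, ¬(x = 0 ∧ y = 0 ∧ z = 0) ∧
      a*x^2 + b*y^2 + c*z^2 + 2*d*x*y + 2*e*x*z + 2*f*y*z = (m : ℤ) := Nat.sInf_mem hne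
  have hmin : ∀ x y z : ℤ, ¬(x = 0 ∧ y = 0 ∧ z = 0) →
      (m : ℤ) ≤ a*x^2 + b*y^2 + c*z^2 + 2*d*x*y + 2*e*x*z + 2*f*y*z := by
    intro x y z hxyz
    have h1 := hpos x y z hxyz
    have hmem : (a*x^2 + b*y^2 + c*z^2 + 2*d*x*y + 2*e*x*z + 2*f*y*z).toNat ∈ S :=
      ⟨x, y, z, hxyz, by omega⟩
    have := Nat.sInf_le hmem
    omega
  have hm1 : (1 : ℤ) ≤ (m : ℤ) := by rw [← hfv0]; exact hpos x₀ y₀ z₀ hv0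
  clear_value m
  clear hS hmdef hne hSne
  have hgcd : Int.gcd (Int.gcd x₀ y₀ : ℤ) z₀ = 1 := by
    set g : ℕ := Int.gcd (Int.gcd x₀ y₀ : ℤ) z₀ with hgdef
    have hdx : (g : ℤ) ∣ x₀ := dvd_trans (Int.gcd_dvd_left _ _) (Int.gcd_dvd_left _ _)
    have hdy : (g : ℤ) ∣ y₀ := dvd_trans (Int.gcd_dvd_left _ _) (Int.gcd_dvd_right _ _)
    have hdz : (g : ℤ) ∣ z₀ := Int.gcd_dvd_right _ _
    obtain ⟨x₁, hx₁⟩ := hdx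
    obtain ⟨y₁, hy₁⟩ := hdy
    obtain ⟨z₁, hz₁⟩ := hdz
    have hg0 : g ≠ 0 := by
      intro h0
      rw [h0] at hx₁ hy₁ hz₁
      simp only [Nat.cast_zero, zero_mul] at hx₁ hy₁ hz₁
      exact hv0 ⟨hx₁, hy₁, hz₁⟩
    have hv1 : ¬(x₁ = 0 ∧ y₁ = 0 ∧ z₁ = 0) := by
      rintro ⟨rfl, rfl, rfl⟩
      simp only [mul_zero] at hx₁ hy₁ hz₁
      exact hv0 ⟨hx₁, hy₁, hz₁⟩
    have hle := hmin x₁ y₁ z₁ hv1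
    have hpos1 := hpos x₁ y₁ z₁ hv1
    have hfv1 : (m : ℤ) = (g:ℤ)^2 *
        (a*x₁^2 + b*y₁^2 + c*z₁^2 + 2*d*x₁*y₁ + 2*e*x₁*z₁ + 2*f*y₁*z₁) := by
      rw [← hfv0, hx₁, hy₁, hz₁]; ring
    by_contra hne1
    have h2 : (2:ℤ) ≤ (g:ℤ) := by
      have : 2 ≤ g := by omega
      exact_mod_cast this
    exact primitive_min_helper hle h2 hfv1 hpos1
  obtain ⟨m12, m13, m22, m23, m32, m33, hdetM⟩ := ext3 x₀ y₀ z₀ hgcd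
  set B' : ℤ := a*m12^2 + b*m22^2 + c*m32^2 + 2*d*m12*m22 + 2*e*m12*m32 + 2*f*m22*m32 with hB'
  set C' : ℤ := a*m13^2 + b*m23^2 + c*m33^2 + 2*d*m13*m23 + 2*e*m13*m33 + 2*f*m23*m33 with hC'
  set D' : ℤ := a*x₀*m12 + b*y₀*m22 + c*z₀*m32 + d*(x₀*m22 + y₀*m12) + e*(x₀*m32 + z₀*m12)
      + f*(y₀*m32 + z₀*m22) with hD'
  set E' : ℤ := a*x₀*m13 + b*y₀*m23 + c*z₀*m33 + d*(x₀*m23 + y₀*m13) + e*(x₀*m33 + z₀*m13)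
      + f*(y₀*m33 + z₀*m23) with hE'
  set G' : ℤ := a*m12*m13 + b*m22*m23 + c*m32*m33 + d*(m12*m23 + m22*m13)
      + e*(m12*m33 + m32*m13) + f*(m22*m33 + m32*m23) with hG'
  clear_value B' C' D' E' G'
  have idT : ∀ X Y Z : ℤ,
      a*(x₀*X + m12*Y + m13*Z)^2 + b*(y₀*X + m22*Y + m23*Z)^2 + c*(z₀*X + m32*Y + m33*Z)^2
        + 2*d*(x₀*X + m12*Y + m13*Z)*(y₀*X + m22*Y + m23*Z)
        + 2*e*(x₀*X + m12*Y + m13*Z)*(z₀*X + m32*Y + m33*Z)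
        + 2*f*(y₀*X + m22*Y + m23*Z)*(z₀*X + m32*Y + m33*Z)
      = (m:ℤ)*X^2 + B'*Y^2 + C'*Z^2 + 2*D'*X*Y + 2*E'*X*Z + 2*G'*Y*Z := by
    intro X Y Z
    simp only [hB', hC', hD', hE', hG']
    linear_combination X^2 * hfv0
  have hdetT : (m:ℤ)*(B'*C' - G'^2) - D'*(D'*C' - G'*E') + E'*(D'*G' - B'*E') = 1 := by
    have key : (a*x₀^2 + b*y₀^2 + c*z₀^2 + 2*d*x₀*y₀ + 2*e*x₀*z₀ + 2*f*y₀*z₀)*(B'*C' - G'^2)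
        - D'*(D'*C' - G'*E') + E'*(D'*G' - B'*E')
        = (a*(b*c - f^2) - d*(d*c - f*e) + e*(d*f - b*e))
          * (x₀*(m22*m33 - m23*m32) - m12*(y₀*m33 - m23*z₀) + m13*(y₀*m32 - m22*z₀))^2 := by
      simp only [hB', hC', hD', hE', hG']
      ring
    rw [hfv0, hdet, hdetM] at key
    linarith only [key]
  have hmin' : ∀ X Y Z : ℤ, ¬(X = 0 ∧ Y = 0 ∧ Z = 0) →
      (m:ℤ) ≤ (m:ℤ)*X^2 + B'*Y^2 + C'*Z^2 + 2*D'*X*Y + 2*E'*X*Z + 2*G'*Y*Z := by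
    intro X Y Z hXYZ
    rw [← idT X Y Z]
    refine hmin _ _ _ ?_
    rintro ⟨h1, h2, h3⟩
    refine hXYZ ⟨?_, ?_, ?_⟩
    · linear_combination (m22*m33 - m23*m32)*h1 - (m12*m33 - m13*m32)*h2
        + (m12*m23 - m13*m22)*h3 - X*hdetM
    · linear_combination -(y₀*m33 - m23*z₀)*h1 + (x₀*m33 - m13*z₀)*h2
        - (x₀*m23 - m13*y₀)*h3 - Y*hdetM
    · linear_combination (y₀*m32 - m22*z₀)*h1 - (x₀*m32 - m12*z₀)*h2
        + (x₀*m22 - m12*y₀)*h3 - Z*hdetM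
  have hmone : (m:ℤ) = 1 := tern_min_one _ _ _ _ _ _ hm1 hmin' hdetT
  rw [hmone] at idT hmin' hdetT
  obtain ⟨p, q, r, s, hsos⟩ := tern_complete B' C' D' E' G' hmin' hdetT
  set n11 : ℤ := m22*m33 - m23*m32 with hn11
  set n12 : ℤ := -(m12*m33 - m13*m32) with hn12
  set n13 : ℤ := m12*m23 - m13*m22 with hn13
  set n21 : ℤ := -(y₀*m33 - m23*z₀) with hn21
  set n22 : ℤ := x₀*m33 - m13*z₀ with hn22
  set n23 : ℤ := -(x₀*m23 - m13*y₀) with hn23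
  set n31 : ℤ := y₀*m32 - m22*z₀ with hn31
  set n32 : ℤ := -(x₀*m32 - m12*z₀) with hn32
  set n33 : ℤ := x₀*m22 - m12*y₀ with hn33
  clear_value n11 n12 n13 n21 n22 n23 n31 n32 n33
  simp only [hn11, hn12, hn13, hn21, hn22, hn23, hn31, hn32, hn33] at hdetM
  refine ⟨n11 + D'*n21 + E'*n31, n12 + D'*n22 + E'*n32, n13 + D'*n23 + E'*n33,
          p*n21 + q*n31, p*n22 + q*n32, p*n23 + q*n33,
          r*n21 + s*n31, r*n22 + s*n32, r*n23 + s*n33, ?_⟩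
  intro x y z
  set X : ℤ := n11*x + n12*y + n13*z with hX
  set Y : ℤ := n21*x + n22*y + n23*z with hY
  set Z : ℤ := n31*x + n32*y + n33*z with hZ
  clear_value X Y Z
  have hx : x₀*X + m12*Y + m13*Z = x := by
    simp only [hX, hY, hZ, hn11, hn12, hn13, hn21, hn22, hn23, hn31, hn32, hn33]
    linear_combination x * hdetM
  have hy : y₀*X + m22*Y + m23*Z = y := by
    simp only [hX, hY, hZ, hn11, hn12, hn13, hn21, hn22, hn23, hn31, hn32, hn33]
    linear_combination y * hdetM
  have hz : z₀*X + m32*Y + m33*Z = z := by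
    simp only [hX, hY, hZ, hn11, hn12, hn13, hn21, hn22, hn23, hn31, hn32, hn33]
    linear_combination z * hdetM
  have key := idT X Y Z
  rw [hx, hy, hz] at key
  have hs := hsos X Y Z
  have hu : (n11 + D'*n21 + E'*n31)*x + (n12 + D'*n22 + E'*n32)*y + (n13 + D'*n23 + E'*n33)*z
      = X + D'*Y + E'*Z := by
    simp only [hX, hY, hZ]; ring
  have hv : (p*n21 + q*n31)*x + (p*n22 + q*n32)*y + (p*n23 + q*n33)*z = p*Y + q*Z := by
    simp only [hX, hY, hZ]; ring
  have hw : (r*n21 + s*n31)*x + (r*n22 + s*n32)*y + (r*n23 + s*n33)*z = r*Y + s*Z := by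
    simp only [hX, hY, hZ]; ring
  linear_combination key + hs
    - ((n11 + D'*n21 + E'*n31)*x + (n12 + D'*n22 + E'*n32)*y + (n13 + D'*n23 + E'*n33)*z
        + (X + D'*Y + E'*Z))*hu
    - ((p*n21 + q*n31)*x + (p*n22 + q*n32)*y + (p*n23 + q*n33)*z + (p*Y + q*Z))*hv
    - ((r*n21 + s*n31)*x + (r*n22 + s*n32)*y + (r*n23 + s*n33)*z + (r*Y + s*Z))*hw


/-- positive definiteness certificate for the constructed form -/
lemma posdef_helper {s D t P N : ℤ} (hs1 : 1 ≤ s) (hD1 : 1 ≤ D)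
    (hPs : P*s = t^2 + D) (hND : N*D = P + 1) :
    ∀ x y z : ℤ, ¬(x = 0 ∧ y = 0 ∧ z = 0) →
      1 ≤ s*x^2 + P*y^2 + N*z^2 + 2*(-t)*x*y + 2*1*x*z + 2*0*y*z := by
  intro x y z hnz
  by_contra hcon
  push_neg at hcon
  have hform : s*x^2 + P*y^2 + N*z^2 + 2*(-t)*x*y + 2*1*x*z + 2*0*y*z ≤ 0 := by linarith
  have key : s*D*(s*x^2 + P*y^2 + N*z^2 + 2*(-t)*x*y + 2*1*x*z + 2*0*y*z)
      = D*(s*x - t*y + z)^2 + (D*y + t*z)^2 + s*z^2 := by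
    linear_combination (D*y^2 + z^2) * hPs + (s*z^2) * hND
  have hsD : 0 ≤ s*D := by positivity
  have h0 : s*D*(s*x^2 + P*y^2 + N*z^2 + 2*(-t)*x*y + 2*1*x*z + 2*0*y*z) ≤ 0 :=
    mul_nonpos_of_nonneg_of_nonpos hsD hform
  rw [key] at h0
  have e1 : 0 ≤ D*(s*x - t*y + z)^2 := by positivity
  have e2 : 0 ≤ (D*y + t*z)^2 := sq_nonneg _
  have e3 : 0 ≤ s*z^2 := by positivity
  have hz3 : s*z^2 = 0 := by linarith
  have hz : z = 0 := by
    rcases mul_eq_zero.mp hz3 with h | h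
    · exact absurd h (by linarith)
    · exact pow_eq_zero_iff (by norm_num) |>.mp h
  subst hz
  have hy2 : (D*y + t*0)^2 = 0 := by linarith
  have hy : y = 0 := by
    have h1 := pow_eq_zero_iff (n := 2) (by norm_num) |>.mp hy2
    have h2 : D * y = 0 := by linarith
    rcases mul_eq_zero.mp h2 with h | h
    · exact absurd h (by linarith)
    · exact h
  subst hy
  have hx2 : D*(s*x - t*0 + 0)^2 = 0 := by linarith
  have hx : x = 0 := by
    rcases mul_eq_zero.mp hx2 with h | h
    · exact absurd h (by linarith)
    · have h1 := pow_eq_zero_iff (n := 2) (by norm_num) |>.mp h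
      have h2 : s * x = 0 := by linarith
      rcases mul_eq_zero.mp h2 with h' | h'
      · exact absurd h' (by linarith)
      · exact h'
  exact hnz ⟨hx, rfl, rfl⟩

/-- Every positive integer `≡ 1 mod 4` is a sum of three integer squares. -/
theorem three_squares_of_one_mod_four (N : ℕ) (hN : N % 4 = 1) :
    ∃ u v w : ℤ, (N : ℤ) = u^2 + v^2 + w^2 := by
  have hN1 : 1 ≤ N := by omega
  have hNodd : Odd N := by rw [Nat.odd_iff]; omega
  haveI : NeZero (4*N) := ⟨by omega⟩
  have hNc : Nat.Coprime (2*N-1) N := by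
    have h := Nat.gcd_dvd_left (2*N-1) N
    have h' := Nat.gcd_dvd_right (2*N-1) N
    have h2' : Nat.gcd (2*N-1) N ∣ 2*N := Dvd.dvd.mul_left h' 2
    have hd : Nat.gcd (2*N-1) N ∣ 2*N - (2*N-1) := Nat.dvd_sub h2' h
    have he : 2*N - (2*N-1) = 1 := by omega
    rw [he] at hd
    exact Nat.dvd_one.mp hd
  have h2 : Nat.Coprime (2*N-1) 2 :=
    (Nat.Prime.coprime_iff_not_dvd Nat.prime_two).mpr (by omega) |>.symm
  have h4 : Nat.Coprime (2*N-1) 4 := by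
    have h44 : (4:ℕ) = 2^2 := by norm_num
    rw [h44]; exact h2.pow_right 2
  have hcop : Nat.Coprime (2*N-1) (4*N) := Nat.Coprime.mul_right h4 hNc
  have hunit : IsUnit ((2*N-1 : ℕ) : ZMod (4*N)) := (ZMod.isUnit_iff_coprime _ _).mpr hcop
  obtain ⟨P, hPgt, hPp, hPmod⟩ := Nat.forall_exists_prime_gt_and_eq_mod hunit (4*N)
  haveI : Fact P.Prime := ⟨hPp⟩
  have hPmodeq : P ≡ 2*N-1 [MOD 4*N] := (ZMod.natCast_eq_natCast_iff _ _ _).mp hPmod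
  have hP4 : P % 4 = 1 := by
    have h4d : (4:ℕ) ∣ 4*N := ⟨N, rfl⟩
    have h := Nat.ModEq.of_dvd h4d hPmodeq
    unfold Nat.ModEq at h
    omega
  have hPN : P % N = N - 1 := by
    have hNd : (N:ℕ) ∣ 4*N := ⟨4, by ring⟩
    have h := Nat.ModEq.of_dvd hNd hPmodeq
    unfold Nat.ModEq at h
    have h' : (2*N-1) % N = N - 1 := by
      have he : 2*N-1 = N + (N-1) := by omega
      rw [he, Nat.add_mod_left]
      exact Nat.mod_eq_of_lt (by omega)
    rw [h'] at h
    exact h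
  have hdvd : N ∣ (P+1) := by
    refine ⟨P/N + 1, ?_⟩
    have hdm := Nat.div_add_mod P N
    rw [Nat.mul_add, Nat.mul_one]
    omega
  set D : ℕ := (P+1)/N with hDdef
  have hND : N * D = P + 1 := Nat.mul_div_cancel' hdvd
  have hD1 : 1 ≤ D := by
    rcases Nat.eq_zero_or_pos D with h | h
    · rw [h, Nat.mul_zero] at hND; omega
    · exact h
  have hP2 : P ≠ 2 := by omega
  have hPodd : Odd P := hPp.odd_of_ne_two hP2
  have hPnD : ¬ (P ∣ D) := by
    intro hPD
    have h1 : P ∣ N*D := Dvd.dvd.mul_left hPD N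
    rw [hND] at h1
    have h2 := Nat.dvd_sub h1 (dvd_refl P)
    have he : P + 1 - P = 1 := by omega
    rw [he] at h2
    have := Nat.dvd_one.mp h2
    have := hPp.one_lt
    omega
  -- Legendre symbol computations
  have hL1 : legendreSym P (-1) = 1 := by
    rw [legendreSym.at_neg_one hP2, ZMod.χ₄_nat_one_mod_four hP4]
  have hLN : legendreSym P (N:ℤ) = 1 := by
    rw [jacobiSym.legendreSym.to_jacobiSym]
    rw [jacobiSym.quadratic_reciprocity_one_mod_four hN hPodd]
    have hemod : ((P:ℕ):ℤ) % ((N:ℕ):ℤ) = (-1) % ((N:ℕ):ℤ) := by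
      rw [Int.emod_eq_emod_iff_emod_sub_eq_zero]
      have h1 : ((P:ℕ):ℤ) - (-1) = ((P:ℕ):ℤ) + 1 := by ring
      rw [h1]
      have h2 : ((N:ℕ):ℤ) ∣ ((P:ℕ):ℤ) + 1 := by exact_mod_cast Int.natCast_dvd_natCast.mpr hdvd
      exact Int.emod_eq_zero_of_dvd h2
    rw [jacobiSym.mod_left' hemod, jacobiSym.at_neg_one hNodd, ZMod.χ₄_nat_one_mod_four hN]
  have hLD : legendreSym P (D:ℤ) = 1 := by
    have hmul := legendreSym.mul (p := P) ((N:ℕ):ℤ) ((D:ℕ):ℤ)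
    have hcast : ((N:ℕ):ℤ) * ((D:ℕ):ℤ) = ((P:ℕ):ℤ) + 1 := by exact_mod_cast hND
    rw [hcast] at hmul
    have h1 : legendreSym P (((P:ℕ):ℤ)+1) = 1 := by
      rw [show legendreSym P (((P:ℕ):ℤ)+1) = legendreSym P ((((P:ℕ):ℤ)+1) % P) from
        legendreSym.mod P _]
      have hm : (((P:ℕ):ℤ)+1) % ((P:ℕ):ℤ) = 1 := by
        rw [show ((P:ℕ):ℤ)+1 = 1 + ((P:ℕ):ℤ)*1 from by ring, Int.add_mul_emod_self_left]
        exact Int.emod_eq_of_lt (by norm_num) (by exact_mod_cast hPp.one_lt)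
      rw [hm, legendreSym.at_one]
    rw [h1, hLN] at hmul
    linarith [hmul]
  have hDnz : (((D:ℕ):ℤ) : ZMod P) ≠ 0 := by
    rw [Int.cast_natCast, Ne, ZMod.natCast_eq_zero_iff]
    exact hPnD
  have hnz : ((-((D:ℕ):ℤ) : ℤ) : ZMod P) ≠ 0 := by
    rw [Int.cast_neg, neg_ne_zero]; exact hDnz
  have hLnegD : legendreSym P (-((D:ℕ):ℤ)) = 1 := by
    rw [show -((D:ℕ):ℤ) = (-1) * ((D:ℕ):ℤ) from by ring, legendreSym.mul, hL1, hLD]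
    norm_num
  have hsq : IsSquare ((-((D:ℕ):ℤ) : ℤ) : ZMod P) := (legendreSym.eq_one_iff P hnz).mp hLnegD
  obtain ⟨cc, hcc⟩ := hsq
  have hPdvdZ : ((P:ℕ):ℤ) ∣ ((cc.val:ℤ)^2 + ((D:ℕ):ℤ)) := by
    rw [← ZMod.intCast_zmod_eq_zero_iff_dvd]
    push_cast
    rw [ZMod.natCast_val, ZMod.cast_id]
    rw [Int.cast_neg, Int.cast_natCast] at hcc
    linear_combination -hcc
  obtain ⟨sI, hsI⟩ := hPdvdZ
  have hPs : ((P:ℕ):ℤ) * sI = ((cc.val:ℤ))^2 + ((D:ℕ):ℤ) := hsI.symm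
  have hDZ1 : (1:ℤ) ≤ ((D:ℕ):ℤ) := by exact_mod_cast hD1
  have hs1 : (1:ℤ) ≤ sI := by
    by_contra hc
    push_neg at hc
    have h0 : sI ≤ 0 := by linarith
    have hle : ((P:ℕ):ℤ) * sI ≤ 0 := mul_nonpos_of_nonneg_of_nonpos (by positivity) h0
    nlinarith [sq_nonneg ((cc.val:ℤ))]
  have hNDZ : ((N:ℕ):ℤ) * ((D:ℕ):ℤ) = ((P:ℕ):ℤ) + 1 := by exact_mod_cast hND
  have hdet : sI*(((P:ℕ):ℤ)*((N:ℕ):ℤ) - 0^2) - (-(cc.val:ℤ))*((-(cc.val:ℤ))*((N:ℕ):ℤ) - 0*1)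
      + 1*((-(cc.val:ℤ))*0 - ((P:ℕ):ℤ)*1) = 1 := by
    linear_combination ((N:ℕ):ℤ)*hPs + hNDZ
  have hpos := posdef_helper hs1 hDZ1 hPs hNDZ
  obtain ⟨u1, u2, u3, v1, v2, v3, w1, w2, w3, hrep⟩ :=
    tern_sos sI ((P:ℕ):ℤ) ((N:ℕ):ℤ) (-(cc.val:ℤ)) 1 0 hpos hdet
  have hval := hrep 0 0 1
  exact ⟨u3, v3, w3, by linear_combination hval⟩


/-- The `k`-th triangular number. -/
def triangular (k : ℕ) : ℕ := k * (k + 1) / 2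


lemma two_triangular (z : ℕ) : 2 * triangular z = z * (z + 1) := by
  obtain ⟨k, hk⟩ := Nat.even_mul_succ_self z
  rw [triangular, hk]
  omega

lemma parity_contra1 (nz A : ℤ) (h : 8*nz+1 = 4*A) : False := by omega
lemma parity_contra2 (nz A : ℤ) (h : 8*nz+1 = 4*A + 2) : False := by omega
lemma parity_contra3 (nz A : ℤ) (h : 8*nz+1 = 4*A + 3) : False := by omega
lemma parity_contraM (nz A : ℤ) (h : 2*nz = 2*A + 1) : False := by omega

lemma extract_helper (n : ℕ) (a b w : ℤ) (hw : Odd w)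
    (h : 8*(n:ℤ)+1 = (2*a)^2 + (2*b)^2 + w^2) :
    ∃ x y z : ℕ, n = x ^ 2 + y ^ 2 + triangular z := by
  obtain ⟨k, hk⟩ := hw
  subst hk
  have h2 : 2*(n:ℤ) = a^2 + b^2 + k^2 + k := by
    have h4 : 4*(2*(n:ℤ)) = 4*(a^2 + b^2 + k^2 + k) := by linear_combination h
    exact mul_left_cancel₀ (by norm_num : (4:ℤ) ≠ 0) h4
  obtain ⟨j, hj⟩ := Int.even_mul_succ_self k
  -- triangular index
  set z : ℕ := (max k (-1-k)).toNat with hzdef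
  have hmax0 : 0 ≤ max k (-1-k) := by
    rcases le_or_gt 0 k with hh | hh
    · exact le_max_of_le_left hh
    · exact le_max_of_le_right (by omega)
  have hzz : (z:ℤ) = max k (-1-k) := Int.toNat_of_nonneg hmax0
  have hzk : (z:ℤ) * ((z:ℤ)+1) = k*(k+1) := by
    rcases le_or_gt 0 k with hh | hh
    · rw [hzz, max_eq_left (by omega)]
    · rw [hzz, max_eq_right (by omega)]; ring
  have h2T : 2 * ((triangular z : ℕ) : ℤ) = (z:ℤ)*((z:ℤ)+1) := by exact_mod_cast two_triangular z
  rcases Int.even_or_odd a with ⟨s, hs⟩ | ⟨s, hs⟩ <;>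
    rcases Int.even_or_odd b with ⟨t, ht⟩ | ⟨t, ht⟩
  · -- both even
    refine ⟨(s+t).natAbs, (s-t).natAbs, z, ?_⟩
    have hx2 : ((s+t).natAbs : ℤ) * ((s+t).natAbs : ℤ) = (s+t)*(s+t) := Int.natAbs_mul_self' _
    have hy2 : ((s-t).natAbs : ℤ) * ((s-t).natAbs : ℤ) = (s-t)*(s-t) := Int.natAbs_mul_self' _
    have hfin : 2*(n:ℤ) = 2*(((s+t).natAbs : ℤ))^2 + 2*(((s-t).natAbs : ℤ))^2
        + 2*((triangular z : ℕ) : ℤ) := by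
      linear_combination h2 + (a + s + s)*hs + (b + t + t)*ht - 2*hx2 - 2*hy2 - hzk - h2T
    have hfin2 : (n:ℤ) = (((s+t).natAbs : ℤ))^2 + (((s-t).natAbs : ℤ))^2
        + ((triangular z : ℕ) : ℤ) := by linarith
    exact_mod_cast hfin2
  · -- a even, b odd : impossible
    exact absurd (show 2*(n:ℤ) = 2*(2*s^2 + 2*t^2 + 2*t + j) + 1 by
      linear_combination h2 + (a + s + s)*hs + (b + 2*t + 1)*ht + hj)
      (fun hcc => parity_contraM (n:ℤ) _ hcc)
  · -- a odd, b even : impossible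
    exact absurd (show 2*(n:ℤ) = 2*(2*s^2 + 2*s + 2*t^2 + j) + 1 by
      linear_combination h2 + (a + 2*s + 1)*hs + (b + t + t)*ht + hj)
      (fun hcc => parity_contraM (n:ℤ) _ hcc)
  · -- both odd
    refine ⟨(s+t+1).natAbs, (s-t).natAbs, z, ?_⟩
    have hx2 : ((s+t+1).natAbs : ℤ) * ((s+t+1).natAbs : ℤ) = (s+t+1)*(s+t+1) :=
      Int.natAbs_mul_self' _
    have hy2 : ((s-t).natAbs : ℤ) * ((s-t).natAbs : ℤ) = (s-t)*(s-t) := Int.natAbs_mul_self' _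
    have hfin : 2*(n:ℤ) = 2*(((s+t+1).natAbs : ℤ))^2 + 2*(((s-t).natAbs : ℤ))^2
        + 2*((triangular z : ℕ) : ℤ) := by
      linear_combination h2 + (a + 2*s + 1)*hs + (b + 2*t + 1)*ht - 2*hx2 - 2*hy2 - hzk - h2T
    have hfin2 : (n:ℤ) = (((s+t+1).natAbs : ℤ))^2 + (((s-t).natAbs : ℤ))^2
        + ((triangular z : ℕ) : ℤ) := by linarith
    exact_mod_cast hfin2

/-- Every natural number is a sum of two squares plus one triangular number. -/
theorem sum_two_squares_add_triangular (n : ℕ) :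
    ∃ x y z : ℕ, n = x ^ 2 + y ^ 2 + triangular z := by
  obtain ⟨u, v, w, h⟩ := three_squares_of_one_mod_four (8*n+1) (by omega)
  push_cast at h
  rcases Int.even_or_odd u with ⟨su, hsu⟩ | ⟨su, hsu⟩ <;>
    rcases Int.even_or_odd v with ⟨sv, hsv⟩ | ⟨sv, hsv⟩ <;>
      rcases Int.even_or_odd w with ⟨sw, hsw⟩ | ⟨sw, hsw⟩
  · exact absurd (show 8*(n:ℤ)+1 = 4*(su^2 + sv^2 + sw^2) by
      linear_combination h + (u + su + su)*hsu + (v + sv + sv)*hsv + (w + sw + sw)*hsw)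
      (fun hcc => parity_contra1 (n:ℤ) _ hcc)
  · refine extract_helper n su sv w ⟨sw, hsw⟩ ?_
    linear_combination h + (u + su + su)*hsu + (v + sv + sv)*hsv
  · refine extract_helper n su sw v ⟨sv, hsv⟩ ?_
    linear_combination h + (u + su + su)*hsu + (w + sw + sw)*hsw
  · exact absurd (show 8*(n:ℤ)+1 = 4*(su^2 + sv^2 + sv + sw^2 + sw) + 2 by
      linear_combination h + (u + su + su)*hsu + (v + 2*sv + 1)*hsv + (w + 2*sw + 1)*hsw)
      (fun hcc => parity_contra2 (n:ℤ) _ hcc)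
  · refine extract_helper n sv sw u ⟨su, hsu⟩ ?_
    linear_combination h + (v + sv + sv)*hsv + (w + sw + sw)*hsw
  · exact absurd (show 8*(n:ℤ)+1 = 4*(su^2 + su + sv^2 + sw^2 + sw) + 2 by
      linear_combination h + (u + 2*su + 1)*hsu + (v + sv + sv)*hsv + (w + 2*sw + 1)*hsw)
      (fun hcc => parity_contra2 (n:ℤ) _ hcc)
  · exact absurd (show 8*(n:ℤ)+1 = 4*(su^2 + su + sv^2 + sv + sw^2) + 2 by
      linear_combination h + (u + 2*su + 1)*hsu + (v + 2*sv + 1)*hsv + (w + sw + sw)*hsw)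
      (fun hcc => parity_contra2 (n:ℤ) _ hcc)
  · exact absurd (show 8*(n:ℤ)+1 = 4*(su^2 + su + sv^2 + sv + sw^2 + sw) + 3 by
      linear_combination h + (u + 2*su + 1)*hsu + (v + 2*sv + 1)*hsv + (w + 2*sw + 1)*hsw)
      (fun hcc => parity_contra3 (n:ℤ) _ hcc)
end

section
/- Every natural number n can be written as a sum of two triangular numbers plus one square: there exist natural numbers x, y, z with n = t_x + t_y + z². -/
lemma bin_min (α β γ : ℤ)
    (pos : ∀ y z : ℤ, ¬(y = 0 ∧ z = 0) → 0 < α*y^2 + 2*β*(y*z) + γ*z^2) :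
    ∃ μ : ℤ, 0 < μ ∧
      (∃ y z : ℤ, ¬(y = 0 ∧ z = 0) ∧ α*y^2 + 2*β*(y*z) + γ*z^2 = μ) ∧
      (∀ y z : ℤ, ¬(y = 0 ∧ z = 0) → μ ≤ α*y^2 + 2*β*(y*z) + γ*z^2) ∧
      3*μ^2 ≤ 4*(α*γ - β^2) := by
  classical
  obtain ⟨μ, hμ0, ⟨y₀, z₀, hnz₀, hval₀⟩, hmin⟩ :
      ∃ μ : ℤ, 0 < μ ∧
        (∃ y z : ℤ, ¬(y = 0 ∧ z = 0) ∧ α*y^2 + 2*β*(y*z) + γ*z^2 = μ) ∧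
        (∀ y z : ℤ, ¬(y = 0 ∧ z = 0) → μ ≤ α*y^2 + 2*β*(y*z) + γ*z^2) := by
    have hS : (α*1^2 + 2*β*(1*0) + γ*0^2).toNat ∈
        {k : ℕ | ∃ y z : ℤ, ¬(y = 0 ∧ z = 0) ∧ α*y^2 + 2*β*(y*z) + γ*z^2 = k} := by
      have h := pos 1 0 (by simp)
      exact ⟨1, 0, by simp, by omega⟩
    obtain ⟨y₀, z₀, hnz₀, hval₀⟩ := Nat.sInf_mem (⟨_, hS⟩ : Set.Nonempty _)
    refine ⟨_, ?_, ⟨y₀, z₀, hnz₀, hval₀⟩, ?_⟩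
    · have := pos y₀ z₀ hnz₀
      omega
    · intro y z h
      have h1 : 0 < α*y^2 + 2*β*(y*z) + γ*z^2 := pos y z h
      have h2 : (α*y^2 + 2*β*(y*z) + γ*z^2).toNat ∈
          {k : ℕ | ∃ y z : ℤ, ¬(y = 0 ∧ z = 0) ∧ α*y^2 + 2*β*(y*z) + γ*z^2 = k} :=
        ⟨y, z, h, by omega⟩
      have := Nat.sInf_le h2
      omega
  refine ⟨μ, hμ0, ⟨y₀, z₀, hnz₀, hval₀⟩, hmin, ?_⟩
  -- primitivity of (y₀, z₀)
  have hprim : Int.gcd y₀ z₀ = 1 := by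
    by_contra hgg
    have hd0 : Int.gcd y₀ z₀ ≠ 0 := fun h => hnz₀ (Int.gcd_eq_zero_iff.mp h)
    obtain ⟨D, hD⟩ : ∃ D : ℤ, D = (Int.gcd y₀ z₀ : ℤ) := ⟨_, rfl⟩
    have hd2 : 2 ≤ D := by omega
    obtain ⟨y₁, hy₁⟩ : D ∣ y₀ := hD ▸ Int.gcd_dvd_left _ _
    obtain ⟨z₁, hz₁⟩ : D ∣ z₀ := hD ▸ Int.gcd_dvd_right _ _
    have hnz₁ : ¬(y₁ = 0 ∧ z₁ = 0) := by
      rintro ⟨rfl, rfl⟩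
      exact hnz₀ ⟨by simp [hy₁], by simp [hz₁]⟩
    have h1 : μ ≤ α*y₁^2 + 2*β*(y₁*z₁) + γ*z₁^2 := hmin _ _ hnz₁
    have h2 : D^2 * (α*y₁^2 + 2*β*(y₁*z₁) + γ*z₁^2) = μ := by
      rw [← hval₀, hy₁, hz₁]; ring
    have h3 : D^2 * μ ≤ D^2 * (α*y₁^2 + 2*β*(y₁*z₁) + γ*z₁^2) :=
      mul_le_mul_of_nonneg_left h1 (sq_nonneg D)
    nlinarith [mul_nonneg (by nlinarith : (0:ℤ) ≤ D^2 - 4) (le_of_lt hμ0)]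
  have hbez : (1:ℤ) = y₀ * Int.gcdA y₀ z₀ + z₀ * Int.gcdB y₀ z₀ := by
    have := Int.gcd_eq_gcd_ab y₀ z₀
    rw [hprim] at this
    exact_mod_cast this
  obtain ⟨a, b, hbez⟩ : ∃ a b : ℤ, (1:ℤ) = y₀ * a + z₀ * b := ⟨_, _, hbez⟩
  obtain ⟨β', hβ'⟩ : ∃ β', β' = α*(y₀*(-b)) + β*(y₀*a + (-b)*z₀) + γ*(z₀*a) := ⟨_, rfl⟩
  obtain ⟨γ', hγ'⟩ : ∃ γ', γ' = α*(-b)^2 + 2*β*((-b)*a) + γ*a^2 := ⟨_, rfl⟩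
  have hdet : μ*γ' - β'^2 = α*γ - β^2 := by
    rw [← hval₀, hβ', hγ']
    linear_combination (-(α*γ - β^2) * (y₀*a + z₀*b + 1)) * hbez
  obtain ⟨x, hx⟩ : ∃ x : ℤ, 4*(μ*x + β')^2 ≤ μ^2 := by
    rcases le_or_gt (2*(β' % μ)) μ with h | h
    · refine ⟨-(β' / μ), ?_⟩
      have h1 : μ * (β' / μ) + β' % μ = β' := Int.mul_ediv_add_emod β' μ
      have h2 : 0 ≤ β' % μ := Int.emod_nonneg _ (by omega)
      nlinarith
    · refine ⟨-(β' / μ) - 1, ?_⟩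
      have h1 : μ * (β' / μ) + β' % μ = β' := Int.mul_ediv_add_emod β' μ
      have h3 : β' % μ < μ := Int.emod_lt_of_pos _ hμ0
      nlinarith
  have hval : α*(y₀*x + (-b))^2 + 2*β*((y₀*x + (-b))*(z₀*x + a)) + γ*(z₀*x + a)^2
      = μ*x^2 + 2*β'*x + γ' := by
    rw [← hval₀, hβ', hγ']; ring
  have hnz : ¬(y₀*x + (-b) = 0 ∧ z₀*x + a = 0) := by
    rintro ⟨h1, h2⟩
    have h3 : z₀ * (y₀*x + (-b)) - y₀ * (z₀*x + a) = -(z₀*b + y₀*a) := by ring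
    rw [h1, h2] at h3
    simp only [mul_zero, sub_zero] at h3
    omega
  have hge : μ ≤ μ*x^2 + 2*β'*x + γ' := hval ▸ hmin _ _ hnz
  nlinarith [sq_nonneg (μ*x + β')]

/-- A positive definite binary form of determinant 1 only represents sums of two squares. -/
lemma bin_rep (α β γ n : ℤ)
    (pos : ∀ y z : ℤ, ¬(y = 0 ∧ z = 0) → 0 < α*y^2 + 2*β*(y*z) + γ*z^2)
    (hdet : α*γ - β^2 = 1)
    (y z : ℤ) (hval : α*y^2 + 2*β*(y*z) + γ*z^2 = n) :
    ∃ s t : ℤ, n = s^2 + t^2 := by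
  obtain ⟨μ, hμ0, ⟨y₀, z₀, hnz₀, hval₀⟩, hmin, hbound⟩ := bin_min α β γ pos
  have hμ1 : μ = 1 := by nlinarith
  subst hμ1
  -- (y₀, z₀) is primitive since the form value is 1
  have hprim : Int.gcd y₀ z₀ = 1 := by
    by_contra hgg
    have hd0 : Int.gcd y₀ z₀ ≠ 0 := fun h => hnz₀ (Int.gcd_eq_zero_iff.mp h)
    obtain ⟨D, hD⟩ : ∃ D : ℤ, D = (Int.gcd y₀ z₀ : ℤ) := ⟨_, rfl⟩
    have hd2 : 2 ≤ D := by omega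
    obtain ⟨y₁, hy₁⟩ : D ∣ y₀ := hD ▸ Int.gcd_dvd_left _ _
    obtain ⟨z₁, hz₁⟩ : D ∣ z₀ := hD ▸ Int.gcd_dvd_right _ _
    have hnz₁ : ¬(y₁ = 0 ∧ z₁ = 0) := by
      rintro ⟨rfl, rfl⟩
      exact hnz₀ ⟨by simp [hy₁], by simp [hz₁]⟩
    have h1 : 1 ≤ α*y₁^2 + 2*β*(y₁*z₁) + γ*z₁^2 := hmin _ _ hnz₁
    have h2 : D^2 * (α*y₁^2 + 2*β*(y₁*z₁) + γ*z₁^2) = 1 := by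
      rw [← hval₀, hy₁, hz₁]; ring
    nlinarith
  have hbez : (1:ℤ) = y₀ * Int.gcdA y₀ z₀ + z₀ * Int.gcdB y₀ z₀ := by
    have := Int.gcd_eq_gcd_ab y₀ z₀
    rw [hprim] at this
    exact_mod_cast this
  obtain ⟨a, b, hbez⟩ : ∃ a b : ℤ, (1:ℤ) = y₀ * a + z₀ * b := ⟨_, _, hbez⟩
  obtain ⟨β', hβ'⟩ : ∃ β', β' = α*(y₀*(-b)) + β*(y₀*a + (-b)*z₀) + γ*(z₀*a) := ⟨_, rfl⟩
  obtain ⟨γ', hγ'⟩ : ∃ γ', γ' = α*(-b)^2 + 2*β*((-b)*a) + γ*a^2 := ⟨_, rfl⟩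
  have hdet' : γ' - β'^2 = 1 := by
    have key : 1*γ' - β'^2 = α*γ - β^2 := by
      rw [← hval₀, hβ', hγ']
      linear_combination (-(α*γ - β^2) * (y₀*a + z₀*b + 1)) * hbez
    rw [hdet] at key
    linarith
  -- coordinates of (y, z) in the new basis
  obtain ⟨s, hs⟩ : ∃ s, s = a*y + b*z := ⟨_, rfl⟩
  obtain ⟨t, ht⟩ : ∃ t, t = -z₀*y + y₀*z := ⟨_, rfl⟩
  have htrans : y = y₀*s + (-b)*t ∧ z = z₀*s + a*t := by
    constructor
    · rw [hs, ht]; linear_combination y * hbez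
    · rw [hs, ht]; linear_combination z * hbez
  have hval' : 1*s^2 + 2*β'*(s*t) + γ'*t^2 = n := by
    rw [← hval, htrans.1, htrans.2, ← hval₀, hβ', hγ']; ring
  refine ⟨s + β'*t, t, ?_⟩
  have : (s + β'*t)^2 + (γ' - β'^2)*t^2 = n := by rw [← hval']; ring
  rw [hdet'] at this
  linarith

/-- A primitive vector in `ℤ³` can be completed to a matrix of determinant 1. -/
lemma comp3 (v₁ v₂ v₃ : ℤ) (h : Int.gcd (Int.gcd v₁ v₂ : ℤ) v₃ = 1) :
    ∃ p₁ p₂ p₃ q₁ q₂ q₃ : ℤ,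
      v₁*(p₂*q₃ - p₃*q₂) - v₂*(p₁*q₃ - p₃*q₁) + v₃*(p₁*q₂ - p₂*q₁) = 1 := by
  rcases Nat.eq_zero_or_pos (Int.gcd v₁ v₂) with hG | hG
  · obtain ⟨h1, h2⟩ := Int.gcd_eq_zero_iff.mp hG
    subst h1; subst h2
    rw [show ((Int.gcd (0:ℤ) (0:ℤ) : ℤ)) = 0 by simp] at h
    have h3 : v₃ = 1 ∨ v₃ = -1 := by
      have := Int.isCoprime_iff_gcd_eq_one.mpr h
      have h4 : Int.natAbs v₃ = 1 := by
        simpa [Int.gcd] using h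
      omega
    rcases h3 with rfl | rfl
    · exact ⟨1, 0, 0, 0, 1, 0, by ring⟩
    · exact ⟨1, 0, 0, 0, -1, 0, by ring⟩
  · obtain ⟨g, hg⟩ : ∃ g : ℤ, g = (Int.gcd v₁ v₂ : ℤ) := ⟨_, rfl⟩
    have hg0 : g ≠ 0 := by omega
    obtain ⟨A, B, hAB⟩ : ∃ A B : ℤ, g = v₁ * A + v₂ * B := by
      exact ⟨_, _, hg ▸ Int.gcd_eq_gcd_ab v₁ v₂⟩
    obtain ⟨w₁, hw₁⟩ : g ∣ v₁ := hg ▸ Int.gcd_dvd_left _ _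
    obtain ⟨w₂, hw₂⟩ : g ∣ v₂ := hg ▸ Int.gcd_dvd_right _ _
    obtain ⟨r, s, hrs⟩ : ∃ r s : ℤ, (1:ℤ) = g * r + v₃ * s := by
      have h5 := Int.gcd_eq_gcd_ab g v₃
      have h6 : Int.gcd g v₃ = 1 := by rw [hg]; exact h
      rw [h6] at h5
      exact ⟨_, _, by exact_mod_cast h5⟩
    have hsum : A * w₁ + B * w₂ = 1 := by
      have h6 : g * (A * w₁ + B * w₂) = g * 1 := by
        linear_combination (-1:ℤ)*hAB - A*hw₁ - B*hw₂
      exact mul_left_cancel₀ hg0 h6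
    refine ⟨-B, A, 0, -s*w₁, -s*w₂, r, ?_⟩
    have expand : v₁*(A*r - 0*(-s*w₂)) - v₂*((-B)*r - 0*(-s*w₁)) +
        v₃*((-B)*(-s*w₂) - A*(-s*w₁)) = r*(v₁*A + v₂*B) + v₃*s*(A*w₁ + B*w₂) := by ring
    rw [expand, ← hAB, hsum]
    linarith [hrs]

/-- Ternary form value notation. -/
def Fq (a b c d e f x y z : ℤ) : ℤ :=
  a*x^2 + b*y^2 + c*z^2 + 2*(d*(x*y) + e*(x*z) + f*(y*z))

set_option maxHeartbeats 2000000 in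
/-- A positive definite ternary form of determinant 1 only represents sums of three
squares. -/
lemma ter_rep (a b c d e f n : ℤ)
    (pos : ∀ x y z : ℤ, ¬(x = 0 ∧ y = 0 ∧ z = 0) → 0 < Fq a b c d e f x y z)
    (hdet : a*b*c + 2*(d*e*f) - a*f^2 - b*e^2 - c*d^2 = 1)
    (x y z : ℤ) (hval : Fq a b c d e f x y z = n) :
    ∃ r s t : ℤ, n = r^2 + s^2 + t^2 := by
  classical
  -- Step 1: the minimum of the form
  obtain ⟨μ, hμ0, ⟨v₁, v₂, v₃, hnzv, hvalv⟩, hmin⟩ :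
      ∃ μ : ℤ, 0 < μ ∧
        (∃ x y z : ℤ, ¬(x = 0 ∧ y = 0 ∧ z = 0) ∧ Fq a b c d e f x y z = μ) ∧
        (∀ x y z : ℤ, ¬(x = 0 ∧ y = 0 ∧ z = 0) → μ ≤ Fq a b c d e f x y z) := by
    have hS : (Fq a b c d e f 1 0 0).toNat ∈
        {k : ℕ | ∃ x y z : ℤ, ¬(x = 0 ∧ y = 0 ∧ z = 0) ∧ Fq a b c d e f x y z = k} := by
      have h := pos 1 0 0 (by simp)
      exact ⟨1, 0, 0, by simp, by omega⟩
    obtain ⟨x₀, y₀, z₀, hnz₀, hval₀⟩ := Nat.sInf_mem (⟨_, hS⟩ : Set.Nonempty _)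
    refine ⟨_, ?_, ⟨x₀, y₀, z₀, hnz₀, hval₀⟩, ?_⟩
    · have := pos x₀ y₀ z₀ hnz₀
      omega
    · intro X Y Z h
      have h1 : 0 < Fq a b c d e f X Y Z := pos X Y Z h
      have h2 : (Fq a b c d e f X Y Z).toNat ∈
          {k : ℕ | ∃ x y z : ℤ, ¬(x = 0 ∧ y = 0 ∧ z = 0) ∧ Fq a b c d e f x y z = k} :=
        ⟨X, Y, Z, h, by omega⟩
      have := Nat.sInf_le h2
      omega
  -- Step 2: the minimum vector is primitive
  have hprim : Int.gcd (Int.gcd v₁ v₂ : ℤ) v₃ = 1 := by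
    by_contra hgg
    have hd0 : Int.gcd (Int.gcd v₁ v₂ : ℤ) v₃ ≠ 0 := by
      intro h0
      obtain ⟨h1, h2⟩ := Int.gcd_eq_zero_iff.mp h0
      have h3 : Int.gcd v₁ v₂ = 0 := by exact_mod_cast h1
      obtain ⟨h4, h5⟩ := Int.gcd_eq_zero_iff.mp h3
      exact hnzv ⟨h4, h5, h2⟩
    obtain ⟨D, hD⟩ : ∃ D : ℤ, D = (Int.gcd (Int.gcd v₁ v₂ : ℤ) v₃ : ℤ) := ⟨_, rfl⟩
    have hd2 : 2 ≤ D := by omega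
    have hDv1 : D ∣ v₁ := hD ▸ dvd_trans (Int.gcd_dvd_left _ _) (Int.gcd_dvd_left _ _)
    have hDv2 : D ∣ v₂ := hD ▸ dvd_trans (Int.gcd_dvd_left _ _) (Int.gcd_dvd_right _ _)
    have hDv3 : D ∣ v₃ := hD ▸ Int.gcd_dvd_right _ _
    obtain ⟨w₁, hw₁⟩ := hDv1
    obtain ⟨w₂, hw₂⟩ := hDv2
    obtain ⟨w₃, hw₃⟩ := hDv3
    have hnzw : ¬(w₁ = 0 ∧ w₂ = 0 ∧ w₃ = 0) := by
      rintro ⟨rfl, rfl, rfl⟩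
      exact hnzv ⟨by simp [hw₁], by simp [hw₂], by simp [hw₃]⟩
    have h1 : μ ≤ Fq a b c d e f w₁ w₂ w₃ := hmin _ _ _ hnzw
    have h2 : D^2 * Fq a b c d e f w₁ w₂ w₃ = μ := by
      rw [← hvalv, hw₁, hw₂, hw₃]
      simp only [Fq]; ring
    have h3 : D^2 * μ ≤ D^2 * Fq a b c d e f w₁ w₂ w₃ :=
      mul_le_mul_of_nonneg_left h1 (sq_nonneg D)
    nlinarith [mul_nonneg (by nlinarith : (0:ℤ) ≤ D^2 - 4) (le_of_lt hμ0)]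
  -- Step 3: complete to a unimodular matrix
  obtain ⟨p₁, p₂, p₃, q₁, q₂, q₃, hU⟩ := comp3 v₁ v₂ v₃ hprim
  -- Step 4: transformed coefficients
  obtain ⟨b', hb'⟩ : ∃ b', b' = Fq a b c d e f p₁ p₂ p₃ := ⟨_, rfl⟩
  obtain ⟨c', hc'⟩ : ∃ c', c' = Fq a b c d e f q₁ q₂ q₃ := ⟨_, rfl⟩
  obtain ⟨d', hd'⟩ : ∃ d', d' = a*v₁*p₁ + b*v₂*p₂ + c*v₃*p₃ + d*(v₁*p₂+v₂*p₁)
      + e*(v₁*p₃+v₃*p₁) + f*(v₂*p₃+v₃*p₂) := ⟨_, rfl⟩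
  obtain ⟨e', he'⟩ : ∃ e', e' = a*v₁*q₁ + b*v₂*q₂ + c*v₃*q₃ + d*(v₁*q₂+v₂*q₁)
      + e*(v₁*q₃+v₃*q₁) + f*(v₂*q₃+v₃*q₂) := ⟨_, rfl⟩
  obtain ⟨f', hf'⟩ : ∃ f', f' = a*p₁*q₁ + b*p₂*q₂ + c*p₃*q₃ + d*(p₁*q₂+p₂*q₁)
      + e*(p₁*q₃+p₃*q₁) + f*(p₂*q₃+p₃*q₂) := ⟨_, rfl⟩
  have htrans : ∀ X Y Z : ℤ,
      Fq a b c d e f (v₁*X+p₁*Y+q₁*Z) (v₂*X+p₂*Y+q₂*Z) (v₃*X+p₃*Y+q₃*Z)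
        = Fq μ b' c' d' e' f' X Y Z := by
    intro X Y Z
    rw [← hvalv, hb', hc', hd', he', hf']
    simp only [Fq]; ring
  have hdet' : μ*b'*c' + 2*(d'*e'*f') - μ*f'^2 - b'*e'^2 - c'*d'^2 = 1 := by
    have key : μ*b'*c' + 2*(d'*e'*f') - μ*f'^2 - b'*e'^2 - c'*d'^2
        = (a*b*c + 2*(d*e*f) - a*f^2 - b*e^2 - c*d^2) *
          (v₁*(p₂*q₃ - p₃*q₂) - v₂*(p₁*q₃ - p₃*q₁) + v₃*(p₁*q₂ - p₂*q₁))^2 := by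
      rw [← hvalv, hb', hc', hd', he', hf']
      simp only [Fq]; ring
    rw [key, hU, hdet]; ring
  -- Step 5: the complementary binary form G
  obtain ⟨αG, hαG⟩ : ∃ αG, αG = μ*b' - d'^2 := ⟨_, rfl⟩
  obtain ⟨βG, hβG⟩ : ∃ βG, βG = μ*f' - d'*e' := ⟨_, rfl⟩
  obtain ⟨γG, hγG⟩ : ∃ γG, γG = μ*c' - e'^2 := ⟨_, rfl⟩
  have hdetG : αG*γG - βG^2 = μ := by
    rw [hαG, hβG, hγG]
    linear_combination μ * hdet'
  have hGlow : ∀ Y Z : ℤ, ¬(Y = 0 ∧ Z = 0) →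
      3*μ^2 ≤ 4*(αG*Y^2 + 2*βG*(Y*Z) + γG*Z^2) := by
    intro Y Z hYZ
    obtain ⟨X, hX⟩ : ∃ X : ℤ, 4*(μ*X + (d'*Y + e'*Z))^2 ≤ μ^2 := by
      rcases le_or_gt (2*((d'*Y + e'*Z) % μ)) μ with h | h
      · refine ⟨-((d'*Y + e'*Z) / μ), ?_⟩
        have h1 : μ * ((d'*Y + e'*Z) / μ) + (d'*Y + e'*Z) % μ = d'*Y + e'*Z :=
          Int.mul_ediv_add_emod _ _
        have h2 : 0 ≤ (d'*Y + e'*Z) % μ := Int.emod_nonneg _ (by omega)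
        nlinarith
      · refine ⟨-((d'*Y + e'*Z) / μ) - 1, ?_⟩
        have h1 : μ * ((d'*Y + e'*Z) / μ) + (d'*Y + e'*Z) % μ = d'*Y + e'*Z :=
          Int.mul_ediv_add_emod _ _
        have h3 : (d'*Y + e'*Z) % μ < μ := Int.emod_lt_of_pos _ hμ0
        nlinarith
    have hnzi : ¬(v₁*X+p₁*Y+q₁*Z = 0 ∧ v₂*X+p₂*Y+q₂*Z = 0 ∧ v₃*X+p₃*Y+q₃*Z = 0) := by
      rintro ⟨h1, h2, h3⟩
      have hY : Y = -((v₂*q₃-v₃*q₂)*(v₁*X+p₁*Y+q₁*Z) - (v₁*q₃-v₃*q₁)*(v₂*X+p₂*Y+q₂*Z)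
          + (v₁*q₂-v₂*q₁)*(v₃*X+p₃*Y+q₃*Z)) := by
        linear_combination (-Y) * hU
      have hZ : Z = (v₂*p₃-v₃*p₂)*(v₁*X+p₁*Y+q₁*Z) - (v₁*p₃-v₃*p₁)*(v₂*X+p₂*Y+q₂*Z)
          + (v₁*p₂-v₂*p₁)*(v₃*X+p₃*Y+q₃*Z) := by
        linear_combination (-Z) * hU
      rw [h1, h2, h3] at hY hZ
      exact hYZ ⟨by linarith [hY], by linarith [hZ]⟩
    have hge : μ ≤ Fq μ b' c' d' e' f' X Y Z := by
      rw [← htrans]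
      exact hmin _ _ _ hnzi
    have hGid : μ * Fq μ b' c' d' e' f' X Y Z
        = (μ*X + (d'*Y + e'*Z))^2 + (αG*Y^2 + 2*βG*(Y*Z) + γG*Z^2) := by
      rw [hαG, hβG, hγG]; simp only [Fq]; ring
    nlinarith [hge, hGid, hX, hμ0]
  -- Step 6: μ = 1
  have hμ1 : μ = 1 := by
    have hGpos : ∀ Y Z : ℤ, ¬(Y = 0 ∧ Z = 0) → 0 < αG*Y^2 + 2*βG*(Y*Z) + γG*Z^2 := by
      intro Y Z h
      have := hGlow Y Z h
      nlinarith
    obtain ⟨ν, hν0, ⟨Y₀, Z₀, hnzY, hvalY⟩, hminG, hboundG⟩ := bin_min αG βG γG hGpos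
    rw [hdetG] at hboundG
    have h1 : 3*μ^2 ≤ 4*ν := by
      have := hGlow Y₀ Z₀ hnzY
      omega
    have h2 : 27*μ^3 ≤ 64 := by nlinarith
    nlinarith
  subst hμ1
  -- Step 7: conclude
  have hGpos : ∀ Y Z : ℤ, ¬(Y = 0 ∧ Z = 0) → 0 < αG*Y^2 + 2*βG*(Y*Z) + γG*Z^2 := by
    intro Y Z h
    have := hGlow Y Z h
    nlinarith
  obtain ⟨X, hX⟩ : ∃ X, X = (p₂*q₃-p₃*q₂)*x - (p₁*q₃-p₃*q₁)*y + (p₁*q₂-p₂*q₁)*z := ⟨_, rfl⟩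
  obtain ⟨Y, hY⟩ : ∃ Y, Y = -((v₂*q₃-v₃*q₂)*x - (v₁*q₃-v₃*q₁)*y + (v₁*q₂-v₂*q₁)*z) := ⟨_, rfl⟩
  obtain ⟨Z, hZ⟩ : ∃ Z, Z = (v₂*p₃-v₃*p₂)*x - (v₁*p₃-v₃*p₁)*y + (v₁*p₂-v₂*p₁)*z := ⟨_, rfl⟩
  have himg1 : v₁*X+p₁*Y+q₁*Z = x := by
    rw [hX, hY, hZ]; linear_combination x * hU
  have himg2 : v₂*X+p₂*Y+q₂*Z = y := by
    rw [hX, hY, hZ]; linear_combination y * hU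
  have himg3 : v₃*X+p₃*Y+q₃*Z = z := by
    rw [hX, hY, hZ]; linear_combination z * hU
  have hval' : Fq 1 b' c' d' e' f' X Y Z = n := by
    rw [← htrans, himg1, himg2, himg3, hval]
  have hGid : Fq 1 b' c' d' e' f' X Y Z
      = (X + (d'*Y + e'*Z))^2 + (αG*Y^2 + 2*βG*(Y*Z) + γG*Z^2) := by
    rw [hαG, hβG, hγG]; simp only [Fq]; ring
  have hGval : αG*Y^2 + 2*βG*(Y*Z) + γG*Z^2 = n - (X + (d'*Y + e'*Z))^2 := by
    rw [← hval', hGid]; ring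
  have hdetG1 : αG*γG - βG^2 = 1 := hdetG
  obtain ⟨s, t, hst⟩ := bin_rep αG βG γG (n - (X + (d'*Y + e'*Z))^2) hGpos hdetG1 Y Z hGval
  exact ⟨X + (d'*Y + e'*Z), s, t, by linarith⟩

/-- Every `4m+1` is a sum of three squares. -/
lemma three_squares (m : ℕ) : ∃ r s t : ℤ, 4*(m:ℤ)+1 = r^2 + s^2 + t^2 := by
  rcases Nat.eq_zero_or_pos m with rfl | hm
  · exact ⟨1, 0, 0, by norm_num⟩
  obtain ⟨n, hn⟩ : ∃ n : ℕ, n = 4*m+1 := ⟨_, rfl⟩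
  have hn5 : 5 ≤ n := by omega
  -- Dirichlet: a prime p > 4n with p ≡ 2n-1 (mod 4n)
  have hcop : Nat.Coprime (2*n-1) (4*n) := by
    rw [← Nat.isCoprime_iff_coprime]
    refine ⟨2*(n:ℤ)-1, -((n:ℤ)-1), ?_⟩
    have hc1 : ((2*n-1:ℕ):ℤ) = 2*(n:ℤ)-1 := by omega
    have hc2 : ((4*n:ℕ):ℤ) = 4*(n:ℤ) := by omega
    rw [hc1, hc2]; ring
  haveI : NeZero (4*n) := ⟨by omega⟩
  obtain ⟨p, hpgt, hp, hpmod⟩ :=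
    Nat.forall_exists_prime_gt_and_eq_mod
      (q := 4*n) (a := ((2*n-1 : ℕ) : ZMod (4*n)))
      ((ZMod.isUnit_iff_coprime _ _).mpr hcop) (4*n)
  haveI : Fact p.Prime := ⟨hp⟩
  have hmodeq : Nat.ModEq (4*n) p (2*n-1) :=
    (ZMod.natCast_eq_natCast_iff _ _ _).mp hpmod
  have hp4 : p % 4 = 1 := by
    have h4 : Nat.ModEq 4 p (2*n-1) := hmodeq.of_dvd ⟨n, rfl⟩
    have : p % 4 = (2*n-1) % 4 := h4
    omega
  have hpnmod : Nat.ModEq n p (2*n-1) := hmodeq.of_dvd ⟨4, by ring⟩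
  have hdvdn : n ∣ p + 1 := by
    have h1 : Nat.ModEq n (p+1) (2*n-1+1) := hpnmod.add_right 1
    have h2 : 2*n-1+1 = 2*n := by omega
    rw [h2] at h1
    have h3 : Nat.ModEq n (2*n) 0 := (Nat.modEq_zero_iff_dvd).mpr ⟨2, by ring⟩
    exact (Nat.modEq_zero_iff_dvd).mp (h1.trans h3)
  have hpn5 : 4*n < p := hpgt
  -- Δ with n·Δ = p+1
  obtain ⟨Δ, hΔ⟩ : ((n:ℤ)) ∣ ((p:ℤ) + 1) := by
    exact_mod_cast Int.natCast_dvd_natCast.mpr hdvdn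
  have hnZ : (5:ℤ) ≤ (n:ℤ) := by exact_mod_cast hn5
  have hpZ : 4*(n:ℤ) < (p:ℤ) := by exact_mod_cast hpn5
  have hΔpos : 0 < Δ := by
    by_contra hc
    push_neg at hc
    nlinarith [mul_nonpos_of_nonneg_of_nonpos (by linarith : (0:ℤ) ≤ (n:ℤ)) hc]
  -- -Δ is a square mod p
  have hnzn : ((n:ℤ) : ZMod p) ≠ 0 := by
    rw [Int.cast_natCast, Ne, ZMod.natCast_eq_zero_iff]
    intro hdvd
    have := Nat.le_of_dvd (by omega) hdvd
    omega
  have hlegn : legendreSym p (n:ℤ) = 1 := by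
    rw [jacobiSym.legendreSym.to_jacobiSym]
    have hrec : jacobiSym (n:ℤ) p = jacobiSym (p:ℤ) n :=
      jacobiSym.quadratic_reciprocity_one_mod_four (by omega) (hp.odd_of_ne_two (by omega))
    rw [hrec]
    have hmod : ((p:ℤ)) % ((n:ℕ):ℤ) = (-1) % ((n:ℕ):ℤ) := by
      have hdd : ((n:ℤ)) ∣ ((-1:ℤ) - (p:ℤ)) := ⟨-Δ, by linarith⟩
      exact Int.modEq_iff_dvd.mpr hdd
    have hoddn : Odd n := ⟨2*m, by omega⟩
    rw [jacobiSym.mod_left' hmod, jacobiSym.at_neg_one hoddn,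
      ZMod.χ₄_nat_one_mod_four (by omega)]
  have hsqn : IsSquare (((n:ℤ)) : ZMod p) := (legendreSym.eq_one_iff p hnzn).mp hlegn
  have hsqneg1 : IsSquare (-1 : ZMod p) := ZMod.exists_sq_eq_neg_one_iff.mpr (by omega)
  have hninv : (((n:ℤ) : ZMod p)) * ((Δ:ℤ) : ZMod p) = 1 := by
    have h2 : (((n:ℤ) * Δ : ℤ) : ZMod p) = (((p:ℤ) + 1 : ℤ) : ZMod p) := by rw [← hΔ]
    push_cast at h2
    rw [ZMod.natCast_self] at h2
    push_cast
    rw [h2]; ring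
  have hsqΔ : IsSquare (-((Δ:ℤ)) : ZMod p) := by
    have key : (-(((Δ:ℤ)) : ZMod p))
        = ((-1 : ZMod p) * (((n:ℤ)) : ZMod p)) * ((((Δ:ℤ)) : ZMod p))^2 := by
      linear_combination (((Δ:ℤ)) : ZMod p) * hninv
    rw [key]
    exact (hsqneg1.mul hsqn).mul ⟨_, (sq _)⟩
  obtain ⟨r0, hr0⟩ := hsqΔ
  -- β, γ with p·γ = β² + Δ
  obtain ⟨β, hβ⟩ : ∃ β : ℤ, ((β : ZMod p))^2 = -((Δ:ℤ) : ZMod p) := by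
    refine ⟨(r0.val : ℤ), ?_⟩
    push_cast
    rw [ZMod.natCast_val, ZMod.cast_id]
    rw [hr0]; ring
  obtain ⟨γ, hγ⟩ : ((p:ℤ)) ∣ (β^2 + Δ) := by
    rw [← ZMod.intCast_zmod_eq_zero_iff_dvd]
    push_cast
    rw [hβ]
    ring
  -- the ternary form (n, γ, p; 1, 0, -β) has determinant 1 and represents n
  have hdet1 : (n:ℤ)*γ*(p:ℤ) + 2*(1*0*(-β)) - (n:ℤ)*(-β)^2 - γ*0^2 - (p:ℤ)*1^2 = 1 := by
    linear_combination (-(n:ℤ))*hγ - hΔ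
  have hpos : ∀ x y z : ℤ, ¬(x = 0 ∧ y = 0 ∧ z = 0) →
      0 < Fq (n:ℤ) γ (p:ℤ) 1 0 (-β) x y z := by
    intro x y z hnz
    have hid : ((n:ℤ)*(p:ℤ)) * Fq (n:ℤ) γ (p:ℤ) 1 0 (-β) x y z
        = (p:ℤ)*((n:ℤ)*x+y)^2 + y^2 + (n:ℤ)*((p:ℤ)*z-β*y)^2 := by
      simp only [Fq]
      linear_combination (-(n:ℤ)*y^2)*hγ - (y^2)*hΔ
    have hnp : 0 < (n:ℤ)*(p:ℤ) := mul_pos (by omega) (by omega)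
    have hs1 : (0:ℤ) ≤ (p:ℤ)*((n:ℤ)*x+y)^2 := by positivity
    have hs2 : (0:ℤ) ≤ (n:ℤ)*((p:ℤ)*z-β*y)^2 := by positivity
    have hs3 : (0:ℤ) ≤ y^2 := sq_nonneg y
    have hrhs : 0 < (p:ℤ)*((n:ℤ)*x+y)^2 + y^2 + (n:ℤ)*((p:ℤ)*z-β*y)^2 := by
      rcases eq_or_ne y 0 with rfl | hy
      · rcases eq_or_ne x 0 with rfl | hx
        · have hz : z ≠ 0 := by tauto
          have h3 : (p:ℤ)*z - β*0 ≠ 0 := by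
            have : (p:ℤ)*z ≠ 0 := mul_ne_zero (by omega) hz
            simpa using this
          have h4 : 0 < (n:ℤ)*((p:ℤ)*z-β*0)^2 :=
            mul_pos (by omega) (by positivity)
          linarith
        · have h3 : (n:ℤ)*x + 0 ≠ 0 := by
            have : (n:ℤ)*x ≠ 0 := mul_ne_zero (by omega) hx
            simpa using this
          have h4 : 0 < (p:ℤ)*((n:ℤ)*x+0)^2 := mul_pos (by omega) (by positivity)
          linarith
      · have h4 : 0 < y^2 := by positivity
        linarith
    by_contra hcon
    push_neg at hcon
    have h6 : 0 < ((n:ℤ)*(p:ℤ)) * Fq (n:ℤ) γ (p:ℤ) 1 0 (-β) x y z := by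
      rw [hid]; exact hrhs
    nlinarith [h6, hnp, hcon]
  have hvaln : Fq (n:ℤ) γ (p:ℤ) 1 0 (-β) 1 0 0 = (n:ℤ) := by simp [Fq]
  obtain ⟨r, s, t, hrst⟩ := ter_rep _ _ _ _ _ _ _ hpos hdet1 1 0 0 hvaln
  exact ⟨r, s, t, by rw [← hrst]; omega⟩

lemma two_mul_triangular (x : ℕ) : 2 * triangular x = x * (x + 1) := by
  unfold triangular
  rw [Nat.mul_div_cancel' (Nat.even_mul_succ_self x).two_dvd]

lemma tri_int (k : ℤ) : ∃ x : ℕ, ((x:ℤ)) * ((x:ℤ) + 1) = k * (k + 1) := by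
  rcases le_or_gt 0 k with h | h
  · refine ⟨k.toNat, ?_⟩
    rw [Int.toNat_of_nonneg h]
  · refine ⟨(-1 - k).toNat, ?_⟩
    rw [Int.toNat_of_nonneg (by omega)]
    ring

lemma helper (m : ℕ) (k b c : ℤ)
    (h : 4*(m:ℤ)+1 = (2*k+1)^2 + (2*b)^2 + (2*c)^2) :
    ∃ x y z : ℕ, m = triangular x + triangular y + z ^ 2 := by
  obtain ⟨x, hx⟩ := tri_int (k + b)
  obtain ⟨y, hy⟩ := tri_int (k - b)
  refine ⟨x, y, c.natAbs, ?_⟩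
  have e1 : (2 * triangular x : ℤ) = (k+b) * ((k+b) + 1) := by
    rw [← hx]
    exact_mod_cast congrArg (Nat.cast : ℕ → ℤ) (two_mul_triangular x)
  have e2 : (2 * triangular y : ℤ) = (k-b) * ((k-b) + 1) := by
    rw [← hy]
    exact_mod_cast congrArg (Nat.cast : ℕ → ℤ) (two_mul_triangular y)
  have e3 : |c|^2 = c^2 := sq_abs c
  have big : 4*(m:ℤ) = 4*((triangular x + triangular y + c.natAbs^2 : ℕ) : ℤ) := by
    push_cast
    linear_combination h - 2*e1 - 2*e2 - 4*e3
  have bigN : 4*m = 4*(triangular x + triangular y + c.natAbs^2) := by exact_mod_cast big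
  omega


/-- Every natural number is a sum of two triangular numbers plus one square. -/
theorem sum_two_triangular_add_square (n : ℕ) :
    ∃ x y z : ℕ, n = triangular x + triangular y + z ^ 2 := by
  obtain ⟨r, s, t, h⟩ := three_squares n
  rcases Int.even_or_odd r with ⟨a, rfl⟩ | ⟨a, rfl⟩ <;>
    rcases Int.even_or_odd s with ⟨b, rfl⟩ | ⟨b, rfl⟩ <;>
      rcases Int.even_or_odd t with ⟨c, rfl⟩ | ⟨c, rfl⟩
  · -- all even: contradiction
    exfalso
    obtain ⟨A, hA⟩ : ∃ A:ℤ, A = a^2 + b^2 + c^2 := ⟨_, rfl⟩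
    have h' : 4*(n:ℤ)+1 = 4*A := by rw [hA]; linear_combination h
    omega
  · -- a b even, c odd
    exact helper n c a b (by linear_combination h)
  · exact helper n b a c (by linear_combination h)
  · exfalso
    obtain ⟨A, hA⟩ : ∃ A:ℤ, A = a^2 + b^2 + b + c^2 + c := ⟨_, rfl⟩
    have h' : 4*(n:ℤ)+1 = 4*A + 2 := by rw [hA]; linear_combination h
    omega
  · exact helper n a b c (by linear_combination h)
  · exfalso
    obtain ⟨A, hA⟩ : ∃ A:ℤ, A = a^2 + a + b^2 + c^2 + c := ⟨_, rfl⟩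
    have h' : 4*(n:ℤ)+1 = 4*A + 2 := by rw [hA]; linear_combination h
    omega
  · exfalso
    obtain ⟨A, hA⟩ : ∃ A:ℤ, A = a^2 + a + b^2 + b + c^2 := ⟨_, rfl⟩
    have h' : 4*(n:ℤ)+1 = 4*A + 2 := by rw [hA]; linear_combination h
    omega
  · exfalso
    obtain ⟨A, hA⟩ : ∃ A:ℤ, A = a^2 + a + b^2 + b + c^2 + c := ⟨_, rfl⟩
    have h' : 4*(n:ℤ)+1 = 4*A + 3 := by rw [hA]; linear_combination h
    omega
end

section
/- For every natural number n, the number of ordered pairs (x, y) of natural numbers with t_x + t_y = n equals d₁(4n+1) − d₃(4n+1), where d_i(m) denotes the number of positive divisors of m congruent to i modulo 4. -/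
open Finset ArithmeticFunction Zsqrtd GaussianInt
open scoped ArithmeticFunction.zeta

local notation "ℤ[i]" => GaussianInt

/-- The number of positive divisors of `m` congruent to `i` modulo `4`. -/
def divCountMod4 (m i : ℕ) : ℕ := (m.divisors.filter (fun d => d % 4 = i)).card

namespace Ewell


/-- The character `χ₄` as an arithmetic function. -/
noncomputable def chi : ArithmeticFunction ℤ :=
  ⟨fun n => ZMod.χ₄ (n : ZMod 4), by
    have := ZMod.χ₄_nat_eq_if_mod_four 0
    simpa using this⟩

lemma chi_apply (n : ℕ) : chi n = ZMod.χ₄ (n : ZMod 4) := rfl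

lemma chi_mult : chi.IsMultiplicative := by
  constructor
  · simp [chi_apply]
  · intro m n _
    simp only [chi_apply, Nat.cast_mul, map_mul]

/-- The divisor sum of `χ₄`. -/
noncomputable def S : ArithmeticFunction ℤ := chi * ζ

lemma S_apply (N : ℕ) : S N = ∑ d ∈ N.divisors, ZMod.χ₄ (d : ZMod 4) :=
  coe_mul_zeta_apply

lemma S_mult : S.IsMultiplicative := chi_mult.mul isMultiplicative_zeta.natCast

lemma S_prime_pow {p : ℕ} (hp : p.Prime) (k : ℕ) :
    S (p ^ k) = ∑ j ∈ range (k + 1), (ZMod.χ₄ (p : ZMod 4)) ^ j := by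
  rw [S_apply, Nat.sum_divisors_prime_pow hp]
  refine Finset.sum_congr rfl fun j _ => ?_
  push_cast
  exact map_pow _ _ _

lemma S_pp1 {p : ℕ} (hp : p.Prime) (h1 : p % 4 = 1) (k : ℕ) :
    S (p ^ k) = (k : ℤ) + 1 := by
  rw [S_prime_pow hp, ZMod.χ₄_nat_one_mod_four h1]
  simp

lemma S_pp3 {p : ℕ} (hp : p.Prime) (h3 : p % 4 = 3) (k : ℕ) :
    S (p ^ k) = if Even k then 1 else 0 := by
  rw [S_prime_pow hp, ZMod.χ₄_nat_three_mod_four h3, neg_one_geom_sum]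
  simp only [Nat.even_add_one, ite_not]

lemma S_one : S 1 = 1 := S_mult.1

lemma S_eq_d (N : ℕ) :
    S N = ((N.divisors.filter (fun d => d % 4 = 1)).card : ℤ)
        - ((N.divisors.filter (fun d => d % 4 = 3)).card : ℤ) := by
  rw [S_apply]
  have h : ∀ d ∈ N.divisors,
      ZMod.χ₄ (d : ZMod 4) = (if d % 4 = 1 then (1:ℤ) else 0) - (if d % 4 = 3 then (1:ℤ) else 0) := by
    intro d _
    rw [ZMod.χ₄_nat_eq_if_mod_four]
    have h2 : d % 2 = d % 4 % 2 := by omega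
    rcases (show d % 4 = 0 ∨ d % 4 = 1 ∨ d % 4 = 2 ∨ d % 4 = 3 by omega) with h|h|h|h <;>
      simp [h, h2]
  rw [Finset.sum_congr rfl h, Finset.sum_sub_distrib]
  simp [Finset.sum_ite_eq, Finset.sum_boole]


lemma norm_def' (z : ℤ[i]) : z.norm = z.re * z.re + z.im * z.im := by
  rw [Zsqrtd.norm_def]; ring

lemma bound_aux {a b N : ℤ} (h : a * a + b * b = N) : -N ≤ a ∧ a ≤ N := by
  have hb := mul_self_nonneg b
  have h1 : 0 ≤ a * (a + 1) := by
    rcases le_or_gt 0 a with h' | h'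
    · exact mul_nonneg h' (by linarith)
    · exact mul_nonneg_of_nonpos_of_nonpos h'.le (by omega)
  have h2 : 0 ≤ a * (a - 1) := by
    rcases le_or_gt 0 a with h' | h'
    · rcases eq_or_lt_of_le h' with h'' | h''
      · simp [← h'']
      · exact mul_nonneg h' (by omega)
    · exact mul_nonneg_of_nonpos_of_nonpos h'.le (by omega)
  constructor <;> nlinarith

/-- The set of Gaussian integers of a given norm. -/
def A (N : ℕ) : Set ℤ[i] := {z | z.norm = (N : ℤ)}

lemma finite_A (N : ℕ) : (A N).Finite := by
  have : A N ⊆ (fun p : ℤ × ℤ => (⟨p.1, p.2⟩ : ℤ[i])) ''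
      (Set.Icc (-(N:ℤ), -(N:ℤ)) ((N:ℤ), (N:ℤ))) := by
    rintro z hz
    have hn : z.re * z.re + z.im * z.im = (N:ℤ) := by rw [← norm_def']; exact hz
    have h1 := bound_aux hn
    have h2 := bound_aux (by linarith : z.im * z.im + z.re * z.re = (N:ℤ))
    refine ⟨(z.re, z.im), ?_, by cases z; rfl⟩
    simp only [Set.mem_Icc, Prod.mk_le_mk]
    exact ⟨⟨h1.1, h2.1⟩, ⟨h1.2, h2.2⟩⟩
  exact Set.Finite.subset ((Set.finite_Icc _ _).image _) this

/-- Count of Gaussian integers of norm `N`. -/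
noncomputable def R (N : ℕ) : ℕ := (A N).ncard

set_option synthInstance.maxHeartbeats 1000000 in
lemma prime_of_norm_prime {π : ℤ[i]} (hp : Prime (Zsqrtd.norm π)) : Prime π := by
  rw [← irreducible_iff_prime]
  constructor
  · rw [Zsqrtd.isUnit_iff_norm_isUnit]; exact hp.not_unit
  · intro a b hab
    have h := hp.irreducible.isUnit_or_isUnit (a := a.norm) (b := b.norm)
      (by rw [hab, Zsqrtd.norm_mul])
    rcases h with h | h
    · exact Or.inl ((Zsqrtd.isUnit_iff_norm_isUnit a).mpr h)
    · exact Or.inr ((Zsqrtd.isUnit_iff_norm_isUnit b).mpr h)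

lemma dvd_norm_of_dvd {c z : ℤ[i]} (h : c ∣ z) : Zsqrtd.norm c ∣ Zsqrtd.norm z := by
  obtain ⟨w, rfl⟩ := h
  rw [Zsqrtd.norm_mul]
  exact dvd_mul_right _ _

lemma star_dvd_of_dvd_star {c z : ℤ[i]} (h : c ∣ star z) : star c ∣ z := by
  obtain ⟨w, hw⟩ := h
  exact ⟨star w, by rw [← star_mul', ← hw, star_star]⟩

/-- Main transfer lemma: elements of norm `N` divisible by `c` (of norm `q`)
biject with elements of norm `N/q`. -/
lemma ncard_dvd_eq (c : ℤ[i]) (q M N : ℕ) (hc : Zsqrtd.norm c = (q : ℤ)) (hq : 0 < q)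
    (h : q * M = N) : {z ∈ A N | c ∣ z}.ncard = R M := by
  have hc0 : c ≠ 0 := by
    intro h0
    rw [h0] at hc
    simp only [Zsqrtd.norm_zero] at hc
    omega
  have himg : {z ∈ A N | c ∣ z} = (fun w => c * w) '' A M := by
    ext z
    constructor
    · rintro ⟨hzn, w, rfl⟩
      refine ⟨w, ?_, rfl⟩
      have : (q : ℤ) * Zsqrtd.norm w = (q : ℤ) * (M : ℤ) := by
        rw [← hc]
        rw [A, Set.mem_setOf_eq, Zsqrtd.norm_mul, hc] at hzn
        rw [← hc] at hzn
        rw [hzn, hc, ← h]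
        push_cast
        ring
      have := mul_left_cancel₀ (by exact_mod_cast hq.ne' : (q:ℤ) ≠ 0) this
      exact this
    · rintro ⟨w, hw, rfl⟩
      refine ⟨?_, dvd_mul_right _ _⟩
      rw [A, Set.mem_setOf_eq, Zsqrtd.norm_mul, hc, hw, ← h]
      push_cast
      ring
  rw [himg, Set.ncard_image_of_injective _ (mul_right_injective₀ hc0)]
  rfl




lemma not_dvd_star {p : ℕ} (hp : p.Prime) (hodd : p % 2 = 1) {π : ℤ[i]}
    (hn : Zsqrtd.norm π = (p : ℤ)) : ¬ π ∣ star π := by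
  intro hdvd
  have pZ : Prime ((p : ℤ)) := Nat.prime_iff_prime_int.mp hp
  have h2a : π ∣ ((2 * π.re : ℤ) : ℤ[i]) := by
    have he : ((2 * π.re : ℤ) : ℤ[i]) = π + star π := by
      ext
      · simp [Zsqrtd.re_intCast, Zsqrtd.re_star]; ring
      · simp [Zsqrtd.im_intCast, Zsqrtd.im_star]
    rw [he]
    exact dvd_add dvd_rfl hdvd
  have hdn := dvd_norm_of_dvd h2a
  rw [hn, Zsqrtd.norm_intCast] at hdn
  -- (p : ℤ) ∣ (2 re)^2
  have hpre : (p : ℤ) ∣ π.re := by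
    have h1 := (pZ.dvd_mul.mp hdn)
    have hne2 : ¬ (p:ℤ) ∣ 2 := by
      intro h2
      have : p ∣ 2 := by exact_mod_cast h2
      have := Nat.le_of_dvd (by norm_num) this
      have := hp.two_le
      omega
    rcases h1 with h1 | h1 <;>
    · rcases pZ.dvd_mul.mp h1 with h2 | h2
      · exact absurd h2 hne2
      · exact h2
  obtain ⟨r, hr⟩ := hpre
  have hnn : π.re * π.re + π.im * π.im = (p:ℤ) := by rw [← norm_def', hn]
  have hnn2 : (p:ℤ) * r * ((p:ℤ) * r) + π.im * π.im = (p:ℤ) := by rw [← hr]; exact hnn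
  have hpim : (p : ℤ) ∣ π.im := by
    have hd : (p:ℤ) ∣ π.im * π.im := ⟨1 - (p:ℤ) * (r * r), by linear_combination hnn2⟩
    rcases pZ.dvd_mul.mp hd with h | h <;> exact h
  obtain ⟨s, hs⟩ := hpim
  have hne : (p:ℤ) ≠ 0 := by exact_mod_cast hp.pos.ne'
  have hp1 : (p:ℤ) * (r * r + s * s) = 1 :=
    mul_left_cancel₀ hne (show (p:ℤ) * ((p:ℤ) * (r*r+s*s)) = (p:ℤ) * 1 by
      rw [hs] at hnn2; linear_combination hnn2)
  have ht : 0 ≤ r * r + s * s := add_nonneg (mul_self_nonneg r) (mul_self_nonneg s)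
  have hp2 : (2 : ℤ) ≤ p := by exact_mod_cast hp.two_le
  rcases (show r * r + s * s = 0 ∨ 1 ≤ r * r + s * s by omega) with h0 | h1
  · rw [h0, mul_zero] at hp1; exact absurd hp1 (by norm_num)
  · nlinarith


lemma A_one : A 1 = (({⟨1,0⟩, ⟨-1,0⟩, ⟨0,1⟩, ⟨0,-1⟩} : Finset ℤ[i]) : Set ℤ[i]) := by
  ext z
  simp only [A, Set.mem_setOf_eq, Finset.coe_insert, Set.mem_insert_iff, Finset.coe_singleton,
    Set.mem_singleton_iff]
  constructor
  · intro h
    have hn : z.re * z.re + z.im * z.im = (1:ℤ) := by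
      rw [← norm_def', h]; norm_num
    have h1 := bound_aux hn
    have h2 := bound_aux (by linarith : z.im * z.im + z.re * z.re = (1:ℤ))
    have hre : z.re = -1 ∨ z.re = 0 ∨ z.re = 1 := by omega
    have him : z.im = -1 ∨ z.im = 0 ∨ z.im = 1 := by omega
    rcases hre with hre | hre | hre <;> rcases him with him | him | him <;>
      rw [hre, him] at hn <;> norm_num at hn <;>
      simp [Zsqrtd.ext_iff, hre, him]
  · rintro (rfl | rfl | rfl | rfl) <;> simp [norm_def']

lemma R_one : R 1 = 4 := by
  rw [R, A_one, Set.ncard_coe_finset]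
  decide

lemma odd_of_dvd {m N : ℕ} (h : m ∣ N) (hN : N % 2 = 1) : m % 2 = 1 := by
  rcases Nat.mod_two_eq_zero_or_one m with hm | hm
  · exfalso
    have : 2 ∣ N := dvd_trans (Nat.dvd_of_mod_eq_zero hm) h
    omega
  · exact hm

lemma sub_empty {p N : ℕ} (hN0 : N ≠ 0) (hnd : ¬ p ^ 2 ∣ N) :
    {z ∈ A N | ((p : ℕ) : ℤ[i]) ∣ z} = ∅ := by
  ext z
  simp only [Set.mem_setOf_eq, Set.mem_empty_iff_false, iff_false, not_and]
  rintro hz ⟨w, rfl⟩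
  have hn : ((p:ℤ))^2 * Zsqrtd.norm w = (N:ℤ) := by
    rw [← hz, Zsqrtd.norm_mul, Zsqrtd.norm_natCast]; ring
  set t := (Zsqrtd.norm w).toNat with ht_def
  have ht : (t : ℤ) = Zsqrtd.norm w := Int.toNat_of_nonneg (Zsqrtd.norm_nonneg (by norm_num) w)
  have : p ^ 2 * t = N := by
    have : ((p ^ 2 * t : ℕ) : ℤ) = (N : ℤ) := by push_cast [ht]; linarith
    exact_mod_cast this
  exact hnd ⟨t, this.symm⟩

set_option maxHeartbeats 1000000 in
theorem jacobi : ∀ N : ℕ, 0 < N → N % 2 = 1 → (R N : ℤ) = 4 * S N := by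
  intro N
  induction N using Nat.strong_induction_on with
  | _ N IH =>
  intro hN0 hN2
  rcases eq_or_lt_of_le (show 1 ≤ N from hN0) with h1 | h1
  · rw [← h1, R_one, S_one]; norm_num
  -- N > 1
  set p := N.minFac with hp_def
  have hp : p.Prime := Nat.minFac_prime (by omega)
  have pZ : Prime ((p : ℤ)) := Nat.prime_iff_prime_int.mp hp
  have hpN : p ∣ N := N.minFac_dvd
  have h2p : p % 2 = 1 := odd_of_dvd hpN hN2
  set k := N.factorization p with hk_def
  have hk1 : 1 ≤ k := hp.factorization_pos_of_dvd (by omega) hpN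
  set m := N / p ^ k with hm_def
  have hNm : p ^ k * m = N := Nat.ordProj_mul_ordCompl_eq_self N p
  have hcop : Nat.Coprime p m := Nat.coprime_ordCompl hp (by omega)
  have hm0 : 0 < m := by
    rcases Nat.eq_zero_or_pos m with h | h
    · rw [h, mul_zero] at hNm; omega
    · exact h
  have hm2 : m % 2 = 1 := odd_of_dvd ⟨p ^ k, by rw [← hNm]; ring⟩ hN2
  have hSN : S N = S (p ^ k) * S m := by
    rw [← hNm]; exact S_mult.map_mul_of_coprime (Nat.Coprime.pow_left _ hcop)
  -- quotient by p
  set M1 := p ^ (k - 1) * m with hM1_def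
  have hppow : p * p ^ (k - 1) = p ^ k := by
    rw [← pow_succ']; congr 1; omega
  have hM1 : p * M1 = N := by rw [hM1_def, ← hNm, ← hppow]; ring
  have hM1pos : 0 < M1 := Nat.mul_pos (Nat.pow_pos hp.pos) hm0
  have hM1lt : M1 < N := by
    rw [← hM1]
    exact (Nat.lt_mul_iff_one_lt_left hM1pos).mpr hp.one_lt
  have hM1odd : M1 % 2 = 1 := odd_of_dvd ⟨p, by rw [← hM1]; ring⟩ hN2
  have hSM1 : S M1 = S (p ^ (k - 1)) * S m :=
    S_mult.map_mul_of_coprime (Nat.Coprime.pow_left _ hcop)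
  have hRM1 : (R M1 : ℤ) = 4 * S M1 := IH M1 hM1lt hM1pos hM1odd
  have hp4 : p % 4 = 1 ∨ p % 4 = 3 := by
    have := hp.two_le; omega
  haveI : Fact p.Prime := ⟨hp⟩
  -- key dichotomy on k
  rcases hp4 with h4 | h4
  · -- p ≡ 1 mod 4 : split p = π * star π
    obtain ⟨a, b, hab⟩ := Nat.Prime.sq_add_sq (p := p) (by omega)
    set π : ℤ[i] := ⟨(a : ℤ), (b : ℤ)⟩ with hπ_def
    have hπn : Zsqrtd.norm π = (p : ℤ) := by
      rw [norm_def']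
      push_cast [← hab]
      ring
    have hπp : Prime π := prime_of_norm_prime (by rw [hπn]; exact pZ)
    have hsn : Zsqrtd.norm (star π) = (p : ℤ) := by rw [Zsqrtd.norm_conj, hπn]
    have hsp : Prime (star π) := prime_of_norm_prime (by rw [hsn]; exact pZ)
    have hnds : ¬ π ∣ star π := not_dvd_star hp h2p hπn
    have hnds' : ¬ star π ∣ π := by
      intro h
      apply hnds
      have h' : star π ∣ star (star π) := by rwa [star_star]
      simpa [star_star] using star_dvd_of_dvd_star h'
    have hpfact : ((p : ℕ) : ℤ[i]) = π * star π := by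
      have h0 := Zsqrtd.norm_eq_mul_conj π
      rw [hπn] at h0
      exact_mod_cast h0
    have hcov : A N = {z ∈ A N | π ∣ z} ∪ {z ∈ A N | star π ∣ z} := by
      ext z
      simp only [Set.mem_union, Set.mem_setOf_eq]
      constructor
      · intro hz
        have hzz : ((N : ℕ) : ℤ[i]) = z * star z := by
          have h0 := Zsqrtd.norm_eq_mul_conj z
          rw [A, Set.mem_setOf_eq] at hz
          rw [hz] at h0
          exact_mod_cast h0
        have hdvd : π ∣ z * star z := by
          rw [← hzz]
          exact dvd_trans ⟨star π, hpfact⟩ (Nat.cast_dvd_cast hpN)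
        rcases hπp.dvd_mul.mp hdvd with h | h
        · exact Or.inl ⟨hz, h⟩
        · exact Or.inr ⟨hz, star_dvd_of_dvd_star h⟩
      · rintro (⟨hz, _⟩ | ⟨hz, _⟩) <;> exact hz
    have hint : {z ∈ A N | π ∣ z} ∩ {z ∈ A N | star π ∣ z}
        = {z ∈ A N | ((p : ℕ) : ℤ[i]) ∣ z} := by
      ext z
      simp only [Set.mem_inter_iff, Set.mem_setOf_eq]
      constructor
      · rintro ⟨⟨hz, c, rfl⟩, ⟨-, hsz⟩⟩
        refine ⟨hz, ?_⟩
        have : star π ∣ c := by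
          rcases hsp.dvd_mul.mp hsz with h | h
          · exact absurd h hnds'
          · exact h
        obtain ⟨e, rfl⟩ := this
        exact ⟨e, by rw [hpfact]; ring⟩
      · rintro ⟨hz, c, rfl⟩
        exact ⟨⟨hz, ⟨star π * c, by rw [hpfact]; ring⟩⟩,
               ⟨hz, ⟨π * c, by rw [hpfact]; ring⟩⟩⟩
    have hfin1 : {z ∈ A N | π ∣ z}.Finite := (finite_A N).subset fun z hz => hz.1
    have hfin2 : {z ∈ A N | star π ∣ z}.Finite := (finite_A N).subset fun z hz => hz.1
    have hie := Set.ncard_union_add_ncard_inter _ _ hfin1 hfin2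
    rw [← hcov, hint] at hie
    have hc1 : {z ∈ A N | π ∣ z}.ncard = R M1 := ncard_dvd_eq π p M1 N hπn hp.pos hM1
    have hc2 : {z ∈ A N | star π ∣ z}.ncard = R M1 := ncard_dvd_eq (star π) p M1 N hsn hp.pos hM1
    rw [hc1, hc2] at hie
    rcases eq_or_lt_of_le hk1 with hk | hk2
    · -- k = 1
      have hnd2 : ¬ p ^ 2 ∣ N := by
        rw [hp.pow_dvd_iff_le_factorization (by omega)]
        omega
      rw [sub_empty (by omega) hnd2] at hie
      simp only [Set.ncard_empty, add_zero] at hie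
      have hnat : R N = R M1 + R M1 := hie
      have hieZ : (R N : ℤ) = 2 * R M1 := by rw [hnat]; push_cast; ring
      have hM1m : M1 = m := by rw [hM1_def, ← hk]; simp
      rw [hieZ, hRM1, hSN, ← hk, S_pp1 hp h4 1, hM1m]
      push_cast; ring
    · -- k ≥ 2
      set M2 := p ^ (k - 2) * m with hM2_def
      have hppow2 : p ^ 2 * p ^ (k - 2) = p ^ k := by
        rw [← pow_add]; congr 1; omega
      have hM2 : p ^ 2 * M2 = N := by rw [hM2_def, ← hNm, ← hppow2]; ring
      have hM2pos : 0 < M2 := Nat.mul_pos (Nat.pow_pos hp.pos) hm0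
      have hM2lt : M2 < N := by
        rw [← hM2]
        exact (Nat.lt_mul_iff_one_lt_left hM2pos).mpr
          (Nat.one_lt_pow (by norm_num) hp.one_lt)
      have hM2odd : M2 % 2 = 1 := odd_of_dvd ⟨p ^ 2, by rw [← hM2]; ring⟩ hN2
      have hRM2 : (R M2 : ℤ) = 4 * S M2 := IH M2 hM2lt hM2pos hM2odd
      have hSM2 : S M2 = S (p ^ (k - 2)) * S m :=
        S_mult.map_mul_of_coprime (Nat.Coprime.pow_left _ hcop)
      have hnp2 : Zsqrtd.norm ((p : ℕ) : ℤ[i]) = ((p ^ 2 : ℕ) : ℤ) := by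
        rw [Zsqrtd.norm_natCast]; push_cast; ring
      have hcint : {z ∈ A N | ((p : ℕ) : ℤ[i]) ∣ z}.ncard = R M2 :=
        ncard_dvd_eq _ (p ^ 2) M2 N hnp2 (pow_pos hp.pos 2) hM2
      rw [hcint] at hie
      have hnat : R N + R M2 = R M1 + R M1 := hie
      have hieZ : (R N : ℤ) + R M2 = 2 * R M1 := by
        have := congrArg (fun t : ℕ => (t : ℤ)) hnat
        push_cast at this
        linarith
      rw [hRM1, hRM2] at hieZ
      have e1 : ((k - 1 : ℕ) : ℤ) = (k : ℤ) - 1 := by omega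
      have e2 : ((k - 2 : ℕ) : ℤ) = (k : ℤ) - 2 := by omega
      rw [hSN, S_pp1 hp h4 k]
      rw [hSM1, S_pp1 hp h4 (k - 1), e1] at hieZ
      rw [hSM2, S_pp1 hp h4 (k - 2), e2] at hieZ
      linear_combination hieZ
  · -- p ≡ 3 mod 4 : p stays prime in ℤ[i]
    have hpi : Prime ((p : ℕ) : ℤ[i]) :=
      (GaussianInt.prime_iff_mod_four_eq_three_of_nat_prime p).mpr h4
    have hall : A N = {z ∈ A N | ((p : ℕ) : ℤ[i]) ∣ z} := by
      ext z
      simp only [Set.mem_setOf_eq]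
      refine ⟨fun hz => ⟨hz, ?_⟩, fun h => h.1⟩
      have hzz : ((N : ℕ) : ℤ[i]) = z * star z := by
        have h0 := Zsqrtd.norm_eq_mul_conj z
        rw [A, Set.mem_setOf_eq] at hz
        rw [hz] at h0
        exact_mod_cast h0
      have hdvd : ((p : ℕ) : ℤ[i]) ∣ z * star z := by
        rw [← hzz]; exact Nat.cast_dvd_cast hpN
      rcases hpi.dvd_mul.mp hdvd with h | h
      · exact h
      · have := star_dvd_of_dvd_star h
        rwa [star_natCast] at this
    rcases eq_or_lt_of_le hk1 with hk | hk2
    · -- k = 1 : no representations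
      have hnd2 : ¬ p ^ 2 ∣ N := by
        rw [hp.pow_dvd_iff_le_factorization (by omega)]
        omega
      have hAempty : A N = ∅ := by rw [hall, sub_empty (by omega) hnd2]
      have hR0 : R N = 0 := by rw [R, hAempty, Set.ncard_empty]
      have hS0 : S N = 0 := by
        rw [hSN, ← hk, pow_one, show (p : ℕ) = p ^ 1 from (pow_one p).symm,
          S_pp3 hp h4 1]
        simp
      rw [hR0, hS0]
      simp
    · -- k ≥ 2
      set M2 := p ^ (k - 2) * m with hM2_def
      have hppow2 : p ^ 2 * p ^ (k - 2) = p ^ k := by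
        rw [← pow_add]; congr 1; omega
      have hM2 : p ^ 2 * M2 = N := by rw [hM2_def, ← hNm, ← hppow2]; ring
      have hM2pos : 0 < M2 := Nat.mul_pos (Nat.pow_pos hp.pos) hm0
      have hM2lt : M2 < N := by
        rw [← hM2]
        exact (Nat.lt_mul_iff_one_lt_left hM2pos).mpr
          (Nat.one_lt_pow (by norm_num) hp.one_lt)
      have hM2odd : M2 % 2 = 1 := odd_of_dvd ⟨p ^ 2, by rw [← hM2]; ring⟩ hN2
      have hRM2 : (R M2 : ℤ) = 4 * S M2 := IH M2 hM2lt hM2pos hM2odd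
      have hSM2 : S M2 = S (p ^ (k - 2)) * S m :=
        S_mult.map_mul_of_coprime (Nat.Coprime.pow_left _ hcop)
      have hnp2 : Zsqrtd.norm ((p : ℕ) : ℤ[i]) = ((p ^ 2 : ℕ) : ℤ) := by
        rw [Zsqrtd.norm_natCast]; push_cast; ring
      have hcint : {z ∈ A N | ((p : ℕ) : ℤ[i]) ∣ z}.ncard = R M2 :=
        ncard_dvd_eq _ (p ^ 2) M2 N hnp2 (pow_pos hp.pos 2) hM2
      have hRR : R N = R M2 := by rw [R, hall, hcint]
      have hSS : S N = S M2 := by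
        rw [hSN, hSM2, S_pp3 hp h4 k, S_pp3 hp h4 (k - 2)]
        congr 2
        rcases Nat.even_or_odd k with he | he
        · simp [he, (Nat.even_sub (by omega : 2 ≤ k)).mpr (by simp [he])]
        · have : ¬ Even k := Nat.not_even_iff_odd.mpr he
          have h2 : ¬ Even (k - 2) := by
            intro hc
            exact this (by
              have : k = (k - 2) + 2 := by omega
              rw [this]
              exact hc.add (by norm_num))
          simp [this, h2]
      rw [hRR, hRM2, hSS]

/-- Gaussian integers of norm `N` lying in the right-facing quadrant. -/
def Apos (N : ℕ) : Set ℤ[i] := {z | z.norm = (N : ℤ) ∧ |z.im| < z.re}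

/-- Rotation by `i^k`. -/
def rotF : Fin 4 → ℤ[i] → ℤ[i]
  | 0, z => z
  | 1, z => ⟨-z.im, z.re⟩
  | 2, z => ⟨-z.re, -z.im⟩
  | 3, z => ⟨z.im, -z.re⟩

lemma rotF_norm (k : Fin 4) (z : ℤ[i]) : (rotF k z).norm = z.norm := by
  fin_cases k <;> simp [rotF, norm_def'] <;> ring

lemma R_eq_four_mul (N : ℕ) (hN2 : N % 2 = 1) : R N = 4 * (Apos N).ncard := by
  have hmemA : ∀ (zk : ↥(Apos N) × Fin 4), rotF zk.2 zk.1.1 ∈ A N := by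
    rintro ⟨⟨z, hz1, _⟩, k⟩
    show (rotF k z).norm = (N : ℤ)
    rw [rotF_norm]; exact hz1
  set g : ↥(Apos N) × Fin 4 → ↥(A N) := fun zk => ⟨rotF zk.2 zk.1.1, hmemA zk⟩ with hg
  have hinj : Function.Injective g := by
    rintro ⟨⟨z, hz1, hz2⟩, k⟩ ⟨⟨w, hw1, hw2⟩, j⟩ h
    have h' : rotF k z = rotF j w := congrArg Subtype.val h
    rw [abs_lt] at hz2 hw2
    fin_cases k <;> fin_cases j <;>
      simp only [rotF, Zsqrtd.ext_iff] at h' <;>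
      first
        | (exfalso; omega)
        | (refine Prod.ext (Subtype.ext ?_) rfl
           rw [Zsqrtd.ext_iff]
           dsimp only
           omega)
  have hsurj : Function.Surjective g := by
    rintro ⟨z, hz⟩
    have hzn : z.re * z.re + z.im * z.im = (N : ℤ) := by rw [← norm_def']; exact hz
    have hne : z.re ≠ z.im ∧ z.re ≠ -z.im := by
      constructor <;> intro he
      · have : (N : ℤ) = 2 * (z.im * z.im) := by rw [← hzn, he]; ring
        omega
      · have : (N : ℤ) = 2 * (z.im * z.im) := by rw [← hzn, he]; ring
        omega
    have habs : |z.re| ≠ |z.im| := by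
      intro h
      rcases abs_eq_abs.mp h with h | h
      · exact hne.1 h
      · exact hne.2 h
    rcases lt_or_gt_of_ne habs with hlt | hgt
    · -- |re| < |im| : use rotation 1 or 3
      rcases le_or_gt 0 z.im with him | him
      · refine ⟨⟨⟨⟨z.im, -z.re⟩, ?_, ?_⟩, 1⟩, ?_⟩
        · show Zsqrtd.norm _ = (N : ℤ)
          rw [norm_def']; simpa using by linarith [hzn]
        · show |(-z.re)| < z.im
          rw [abs_neg]
          calc |z.re| < |z.im| := hlt
          _ = z.im := abs_of_nonneg him
        · apply Subtype.ext
          show rotF 1 (⟨z.im, -z.re⟩ : ℤ[i]) = z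
          simp [rotF, Zsqrtd.ext_iff]
      · refine ⟨⟨⟨⟨-z.im, z.re⟩, ?_, ?_⟩, 3⟩, ?_⟩
        · show Zsqrtd.norm _ = (N : ℤ)
          rw [norm_def']; simpa using by linarith [hzn]
        · show |z.re| < -z.im
          calc |z.re| < |z.im| := hlt
          _ = -z.im := abs_of_neg him
        · apply Subtype.ext
          show rotF 3 (⟨-z.im, z.re⟩ : ℤ[i]) = z
          simp [rotF, Zsqrtd.ext_iff]
    · -- |im| < |re| : use rotation 0 or 2
      rcases le_or_gt 0 z.re with hre | hre
      · refine ⟨⟨⟨z, hz, ?_⟩, 0⟩, ?_⟩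
        · calc |z.im| < |z.re| := hgt
          _ = z.re := abs_of_nonneg hre
        · apply Subtype.ext
          show rotF 0 z = z
          rfl
      · refine ⟨⟨⟨⟨-z.re, -z.im⟩, ?_, ?_⟩, 2⟩, ?_⟩
        · show Zsqrtd.norm _ = (N : ℤ)
          rw [norm_def']; simpa using by linarith [hzn]
        · show |(-z.im)| < -z.re
          rw [abs_neg]
          calc |z.im| < |z.re| := hgt
          _ = -z.re := abs_of_neg hre
        · apply Subtype.ext
          show rotF 2 (⟨-z.re, -z.im⟩ : ℤ[i]) = z
          simp [rotF, Zsqrtd.ext_iff]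
  have e : ↥(Apos N) × Fin 4 ≃ ↥(A N) := Equiv.ofBijective g ⟨hinj, hsurj⟩
  have hcard := Nat.card_congr e
  rw [Nat.card_prod, Nat.card_coe_set_eq, Nat.card_coe_set_eq] at hcard
  simp only [Nat.card_eq_fintype_card, Fintype.card_fin] at hcard
  rw [R, ← hcard]
  ring

lemma two_triangular (x : ℕ) : 2 * triangular x = x * (x + 1) :=
  Nat.mul_div_cancel' (Nat.even_mul_succ_self x).two_dvd

lemma pairs_card (n : ℕ) :
    Nat.card {p : ℕ × ℕ // triangular p.1 + triangular p.2 = n}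
      = (Apos (4 * n + 1)).ncard := by
  set N := 4 * n + 1 with hN
  have hmem : ∀ q : {p : ℕ × ℕ // triangular p.1 + triangular p.2 = n},
      (⟨(q.1.1 : ℤ) + q.1.2 + 1, (q.1.1 : ℤ) - q.1.2⟩ : ℤ[i]) ∈ Apos N := by
    rintro ⟨⟨x, y⟩, hq⟩
    dsimp only at hq
    have htx := two_triangular x
    have hty := two_triangular y
    have key : (x : ℤ) * (x + 1) + (y : ℤ) * (y + 1) = 2 * n := by
      have : ((2 * triangular x + 2 * triangular y : ℕ) : ℤ) = ((2 * n : ℕ) : ℤ) := by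
        congr 1
        omega
      rw [htx, hty] at this
      push_cast at this ⊢
      linarith
    constructor
    · show Zsqrtd.norm _ = (N : ℤ)
      rw [norm_def']
      dsimp only
      rw [hN]
      push_cast
      linear_combination 2 * key
    · show |(x : ℤ) - y| < (x : ℤ) + y + 1
      rw [abs_lt]
      constructor <;> omega
  set f : {p : ℕ × ℕ // triangular p.1 + triangular p.2 = n} → ↥(Apos N) :=
    fun q => ⟨⟨(q.1.1 : ℤ) + q.1.2 + 1, (q.1.1 : ℤ) - q.1.2⟩, hmem q⟩ with hf
  have hinj : Function.Injective f := by
    rintro ⟨⟨x, y⟩, hq⟩ ⟨⟨x', y'⟩, hq'⟩ h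
    have h' := congrArg Subtype.val h
    rw [Zsqrtd.ext_iff] at h'
    simp only [hf] at h'
    have h1 : x = x' := by omega
    have h2 : y = y' := by omega
    apply Subtype.ext
    exact Prod.ext h1 h2
  have hsurj : Function.Surjective f := by
    rintro ⟨z, hz1, hz2⟩
    have hn : z.re * z.re + z.im * z.im = (N : ℤ) := by rw [← norm_def']; exact hz1
    have habs := abs_lt.mp hz2
    -- parity of re + im
    have hpar : (z.re + z.im) % 2 = 1 := by
      rcases Int.even_or_odd z.re with ⟨a, ha⟩ | ⟨a, ha⟩ <;>
        rcases Int.even_or_odd z.im with ⟨b, hb⟩ | ⟨b, hb⟩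
      · exfalso
        have hw : (N : ℤ) = 4 * (a * a + b * b) := by rw [← hn, ha, hb]; ring
        generalize a * a + b * b = w at hw
        omega
      · omega
      · omega
      · exfalso
        have hw : (N : ℤ) = 4 * (a * a + b * b + a + b) + 2 := by rw [← hn, ha, hb]; ring
        generalize a * a + b * b + a + b = w at hw
        omega
    set x : ℕ := ((z.re + z.im - 1) / 2).toNat with hx_def
    set y : ℕ := ((z.re - z.im - 1) / 2).toNat with hy_def
    have hu : (x : ℤ) + y + 1 = z.re := by omega
    have hv : (x : ℤ) - y = z.im := by omega
    have hsum : triangular x + triangular y = n := by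
      have htx := two_triangular x
      have hty := two_triangular y
      have key : ((4 * (triangular x + triangular y) + 1 : ℕ) : ℤ) = ((N : ℕ) : ℤ) := by
        have htxZ : 2 * ((triangular x : ℤ)) = (x : ℤ) * (x + 1) := by exact_mod_cast htx
        have htyZ : 2 * ((triangular y : ℤ)) = (y : ℤ) * (y + 1) := by exact_mod_cast hty
        have hNZ : ((N : ℕ) : ℤ) = 4 * (n : ℤ) + 1 := by rw [hN]; push_cast; ring
        push_cast
        linear_combination 2 * htxZ + 2 * htyZ + hn + ((x:ℤ) + y + 1 + z.re) * hu
          + ((x:ℤ) - y + z.im) * hv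
      have key' : 4 * (triangular x + triangular y) + 1 = N := by exact_mod_cast key
      omega
    refine ⟨⟨(x, y), hsum⟩, ?_⟩
    apply Subtype.ext
    rw [Zsqrtd.ext_iff]
    dsimp only
    exact ⟨hu, hv⟩
  rw [← Nat.card_coe_set_eq]
  exact Nat.card_congr (Equiv.ofBijective f ⟨hinj, hsurj⟩)

end Ewell

/-- Ewell's theorem: the number of representations of `n` as an ordered sum of
two triangular numbers equals `d₁(4n+1) - d₃(4n+1)`. -/
theorem card_sum_two_triangular (n : ℕ) :
    (Nat.card {p : ℕ × ℕ // triangular p.1 + triangular p.2 = n} : ℤ) =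
      (divCountMod4 (4 * n + 1) 1 : ℤ) - (divCountMod4 (4 * n + 1) 3 : ℤ) := by
  have h1 := Ewell.pairs_card n
  have h2 := Ewell.R_eq_four_mul (4 * n + 1) (by omega)
  have h3 := Ewell.jacobi (4 * n + 1) (by omega) (by omega)
  have h4 := Ewell.S_eq_d (4 * n + 1)
  have h2Z : (Ewell.R (4 * n + 1) : ℤ) = 4 * ((Ewell.Apos (4 * n + 1)).ncard : ℤ) := by
    exact_mod_cast congrArg (fun t : ℕ => (t : ℤ)) h2
  rw [h1]
  have : (4 : ℤ) * ((Ewell.Apos (4 * n + 1)).ncard : ℤ) = 4 * Ewell.S (4 * n + 1) := by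
    rw [← h2Z, h3]
  have h5 : ((Ewell.Apos (4 * n + 1)).ncard : ℤ) = Ewell.S (4 * n + 1) := by linarith
  rw [h5, h4]
  rfl
end

section
/- Every positive integer n ≡ 5 (mod 8) can be written as a sum of three or fewer squares; more precisely, writing n = 8m + 5, if m = t_x + 2y² + 4t_z then n = (2x+1)² + (4y)² + 4(2z+1)²; if m = t_x + 4t_y + 2z² then n = (2x+1)² + (4y+2)² + (4z)²; and if m = t_x + 4t_z then n = (2x+1)² + 4(2z+1)². -/
-- binary forms
def q2 (a b p x y : ℤ) : ℤ := a*x^2 + b*y^2 + 2*p*x*y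
def d2 (a b p : ℤ) : ℤ := a*b - p^2

lemma round_lemma (p m : ℤ) (hm : 0 < m) : ∃ k : ℤ, -m ≤ 2*(p - k*m) ∧ 2*(p - k*m) < m := by
  refine ⟨(2*p + m) / (2*m), ?_, ?_⟩ <;>
  · have h1 := Int.emod_nonneg (2*p + m) (by positivity : (2*m) ≠ 0)
    have h2 := Int.emod_lt_of_pos (2*p + m) (by positivity : 0 < 2*m)
    have h3 := Int.mul_ediv_add_emod (2*p + m) (2*m)
    linarith

lemma exists_min {P : ℕ → Prop} (h : ∃ n, P n) : ∃ n, P n ∧ ∀ m, P m → n ≤ m := by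
  classical
  exact ⟨Nat.find h, Nat.find_spec h, fun m hm => Nat.find_min' h hm⟩

-- minimum of a positive definite binary form: witness with min property and Hermite bound
lemma bin_min_s18 (a b p : ℤ)
    (hpd : ∀ x y : ℤ, ¬(x = 0 ∧ y = 0) → 0 < q2 a b p x y) :
    ∃ x y : ℤ, ¬(x = 0 ∧ y = 0) ∧ Int.gcd x y = 1 ∧
      (∀ X Y : ℤ, ¬(X = 0 ∧ Y = 0) → q2 a b p x y ≤ q2 a b p X Y) ∧
      3 * (q2 a b p x y)^2 ≤ 4 * d2 a b p := by
  have ha : 0 < a := by have := hpd 1 0 (by simp); simpa [q2] using this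
  have hP : ∃ k : ℕ, 0 < k ∧ ∃ x y : ℤ, ¬(x = 0 ∧ y = 0) ∧ q2 a b p x y = (k : ℤ) := by
    refine ⟨a.toNat, by omega, 1, 0, by simp, ?_⟩
    simp [q2]; omega
  obtain ⟨k, ⟨hk0, x, y, hxy0, hxyv⟩, hkmin⟩ := exists_min hP
  have hmin : ∀ X Y : ℤ, ¬(X = 0 ∧ Y = 0) → (k:ℤ) ≤ q2 a b p X Y := by
    intro X Y h0
    have hv := hpd X Y h0
    have hP' : 0 < (q2 a b p X Y).toNat ∧ ∃ x y : ℤ, ¬(x = 0 ∧ y = 0) ∧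
        q2 a b p x y = ((q2 a b p X Y).toNat : ℤ) := ⟨by omega, X, Y, h0, by omega⟩
    have := hkmin _ hP'
    omega
  -- primitivity
  have hg : Int.gcd x y = 1 := by
    set g : ℕ := Int.gcd x y with hgdef
    obtain ⟨x1, hx1⟩ : (g:ℤ) ∣ x := Int.gcd_dvd_left x y
    obtain ⟨y1, hy1⟩ : (g:ℤ) ∣ y := Int.gcd_dvd_right x y
    have hg0 : g ≠ 0 := by
      intro h
      rw [h] at hx1 hy1; simp at hx1 hy1; exact hxy0 ⟨hx1, hy1⟩
    have h10 : ¬(x1 = 0 ∧ y1 = 0) := by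
      rintro ⟨h1, h2⟩; rw [h1] at hx1; rw [h2] at hy1; simp at hx1 hy1
      exact hxy0 ⟨hx1, hy1⟩
    have hval : (k:ℤ) = (g:ℤ)^2 * q2 a b p x1 y1 := by
      rw [← hxyv, hx1, hy1]; unfold q2; ring
    have hv1 : (k:ℤ) ≤ q2 a b p x1 y1 := hmin x1 y1 h10
    have hvpos := hpd x1 y1 h10
    by_contra hne
    have hgg : (2:ℤ) ≤ (g:ℤ) := by omega
    have hg4 : (4:ℤ) ≤ (g:ℤ)^2 := by nlinarith [hgg]
    nlinarith [hvpos, hv1, hval, hg4]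
  refine ⟨x, y, hxy0, hg, fun X Y h0 => by rw [hxyv]; exact hmin X Y h0, ?_⟩
  have hbez : x * Int.gcdA x y + y * Int.gcdB x y = 1 := by
    have := Int.gcd_eq_gcd_ab x y
    rw [hg] at this; exact_mod_cast this.symm
  set α := Int.gcdA x y with hα
  set β := Int.gcdB x y with hβ
  set m : ℤ := (k:ℤ) with hm
  have hmpos : (0:ℤ) < m := by omega
  set p1 : ℤ := a*x*(-β) + b*y*α + p*(x*α + (-β)*y) with hp1
  obtain ⟨kk, hk1, hk2⟩ := round_lemma p1 m hmpos
  set p2 : ℤ := p1 - kk*m with hp2def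
  set X2 : ℤ := -kk*x - β with hX2
  set Y2 : ℤ := -kk*y + α with hY2
  have h20 : ¬(X2 = 0 ∧ Y2 = 0) := by
    rintro ⟨h1, h2⟩
    rw [hX2] at h1; rw [hY2] at h2
    have : (1:ℤ) = 0 := by linear_combination -hbez - y*h1 + x*h2
    exact absurd this one_ne_zero
  set b2 : ℤ := q2 a b p X2 Y2 with hb2
  have hb2m : m ≤ b2 := hmin X2 Y2 h20
  have hdet : m * b2 - p2^2 = d2 a b p := by
    have hm' : m = q2 a b p x y := hxyv.symm
    rw [hb2, hp2def, hp1, hm', hX2, hY2]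
    unfold q2 d2
    linear_combination ((x*α+y*β+1) * (a*b - p^2)) * hbez
  have hsq : 4*p2^2 ≤ m^2 := by nlinarith [hk1, hk2]
  rw [hxyv]
  nlinarith [hdet, hb2m, hmpos, hsq]

-- a positive definite binary form of determinant 1 is a sum of two squares of linear forms
lemma bin_det_one (a b p : ℤ)
    (hpd : ∀ x y : ℤ, ¬(x = 0 ∧ y = 0) → 0 < q2 a b p x y)
    (hd : d2 a b p = 1) :
    ∃ e f g h : ℤ, ∀ X Y : ℤ, q2 a b p X Y = (e*X + f*Y)^2 + (g*X + h*Y)^2 := by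
  obtain ⟨x, y, hxy0, hg, hmin, hbound⟩ := bin_min_s18 a b p hpd
  have hm1 : q2 a b p x y = 1 := by
    have h1 : 0 < q2 a b p x y := hpd x y hxy0
    nlinarith [hbound, hd, h1]
  have hbez : x * Int.gcdA x y + y * Int.gcdB x y = 1 := by
    have := Int.gcd_eq_gcd_ab x y
    rw [hg] at this; exact_mod_cast this.symm
  set α := Int.gcdA x y with hα
  set β := Int.gcdB x y with hβ
  -- p1 = polar of (x,y) and (-β, α)
  set p1 : ℤ := a*x*(-β) + b*y*α + p*(x*α + (-β)*y) with hp1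
  -- total transform T = [[x, -p1*x-β],[y, -p1*y+α]], det = xα+yβ = 1
  set t12 : ℤ := -p1*x - β with ht12
  set t22 : ℤ := -p1*y + α with ht22
  have hdetT : x*t22 - t12*y = 1 := by
    rw [ht12, ht22]; linear_combination hbez
  -- transformed form is (1, b2, 0); b2 = q2 at (t12,t22); p-coeff = p1 - p1*1 = 0
  set b2 : ℤ := q2 a b p t12 t22 with hb2
  have hp2 : a*x*t12 + b*y*t22 + p*(x*t22 + t12*y) = 0 := by
    rw [ht12, ht22, hp1]
    have hxyv := hm1
    unfold q2 at hxyv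
    linear_combination -p1 * hxyv + (0:ℤ)
  have key : q2 a b p x y * b2 - (a*x*t12 + b*y*t22 + p*(x*t22 + t12*y))^2
      = (x*t22 - t12*y)^2 * d2 a b p := by
    rw [hb2]; unfold q2 d2; ring
  rw [hm1, hp2, hdetT, hd] at key
  have hb21 : b2 = 1 := by linarith [key]
  -- inverse transform W = [[t22, -t12],[-y, x]]
  refine ⟨t22, -t12, -y, x, fun X Y => ?_⟩
  -- value identity: q2 F (x*u + t12*v, y*u + t22*v) = u^2*(q2 x y) + v^2*b2 + 2*u*v*(polar) = u² + v²
  have hval : ∀ u v : ℤ, q2 a b p (x*u + t12*v) (y*u + t22*v) = u^2 + v^2 := by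
    intro u v
    have e1 := hm1
    have e2 : a*t12^2 + b*t22^2 + 2*p*t12*t22 = 1 := by
      have := hb21; rw [hb2] at this; unfold q2 at this; linarith
    have e3 := hp2
    unfold q2 at e1 ⊢
    linear_combination u^2 * e1 + v^2 * e2 + (2*u*v) * e3
  have hco : x*(t22*X - t12*Y) + t12*(-y*X + x*Y) = X ∧
      y*(t22*X - t12*Y) + t22*(-y*X + x*Y) = Y := by
    refine ⟨by linear_combination X * hdetT, by linear_combination Y * hdetT⟩
  have := hval (t22*X - t12*Y) (-y*X + x*Y)
  rw [hco.1, hco.2] at this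
  rw [this]; ring

-- ternary forms
def q3 (a b c p q r x y z : ℤ) : ℤ :=
  a*x^2 + b*y^2 + c*z^2 + 2*p*x*y + 2*q*x*z + 2*r*y*z

def d3 (a b c p q r : ℤ) : ℤ := a*b*c + 2*p*q*r - a*r^2 - b*q^2 - c*p^2

def dm (u11 u12 u13 u21 u22 u23 u31 u32 u33 : ℤ) : ℤ :=
  u11*u22*u33 + u12*u23*u31 + u13*u21*u32 - u11*u23*u32 - u12*u21*u33 - u13*u22*u31

def pol3 (a b c p q r x y z X Y Z : ℤ) : ℤ :=
  a*x*X + b*y*Y + c*z*Z + p*(x*Y+X*y) + q*(x*Z+X*z) + r*(y*Z+Y*z)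

-- completion of a primitive vector to a unimodular matrix (as first column)
lemma ext3_s18 (x y z : ℤ) (h : Int.gcd (↑(Int.gcd x y)) z = 1) :
    ∃ u12 u13 u22 u23 u32 u33 : ℤ, dm x u12 u13 y u22 u23 z u32 u33 = 1 := by
  rcases Nat.eq_zero_or_pos (Int.gcd x y) with hg | hg
  · obtain ⟨hx0, hy0⟩ := Int.gcd_eq_zero_iff.mp hg
    subst hx0; subst hy0
    rw [hg] at h
    have hz : z^2 = 1 := by
      have : z.natAbs = 1 := by simpa [Int.gcd] using h
      have := Int.natAbs_eq z
      rcases this with h1 | h1 <;> rw [h1] <;> simp [this]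
    exact ⟨1, 0, 0, z, 0, 0, by unfold dm; linear_combination hz⟩
  · set g : ℕ := Int.gcd x y with hgdef
    obtain ⟨x1, hx1⟩ : (g:ℤ) ∣ x := Int.gcd_dvd_left x y
    obtain ⟨y1, hy1⟩ : (g:ℤ) ∣ y := Int.gcd_dvd_right x y
    have hg1 : Int.gcd x1 y1 = 1 := by
      have hx1' : x1 = x / g := by rw [hx1]; rw [Int.mul_ediv_cancel_left]; exact_mod_cast hg.ne'
      have hy1' : y1 = y / g := by rw [hy1]; rw [Int.mul_ediv_cancel_left]; exact_mod_cast hg.ne'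
      rw [hx1', hy1', hgdef]
      exact Int.gcd_div_gcd_div_gcd (by exact_mod_cast hg)
    have hbez1 : x1 * Int.gcdA x1 y1 + y1 * Int.gcdB x1 y1 = 1 := by
      have := Int.gcd_eq_gcd_ab x1 y1
      rw [hg1] at this; exact_mod_cast this.symm
    have hbez2 : (g:ℤ) * Int.gcdA (g:ℤ) z + z * Int.gcdB (g:ℤ) z = 1 := by
      have := Int.gcd_eq_gcd_ab (g:ℤ) z
      rw [h] at this; exact_mod_cast this.symm
    set α := Int.gcdA x1 y1
    set β := Int.gcdB x1 y1
    set γ := Int.gcdA (g:ℤ) z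
    set δ := Int.gcdB (g:ℤ) z
    refine ⟨-β, -δ*x1, α, -δ*y1, 0, γ, ?_⟩
    rw [hx1, hy1]; unfold dm
    linear_combination (γ*(g:ℤ) + δ*z) * hbez1 + hbez2

lemma inj3 (u11 u12 u13 u21 u22 u23 u31 u32 u33 X Y Z : ℤ)
    (hU : dm u11 u12 u13 u21 u22 u23 u31 u32 u33 = 1)
    (h1 : u11*X + u12*Y + u13*Z = 0)
    (h2 : u21*X + u22*Y + u23*Z = 0)
    (h3 : u31*X + u32*Y + u33*Z = 0) : X = 0 ∧ Y = 0 ∧ Z = 0 := by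
  unfold dm at hU
  refine ⟨?_, ?_, ?_⟩
  · linear_combination (-X) * hU + (u22*u33-u23*u32)*h1 + (u13*u32-u12*u33)*h2 + (u12*u23-u13*u22)*h3
  · linear_combination (-Y) * hU + (u23*u31-u21*u33)*h1 + (u11*u33-u13*u31)*h2 + (u13*u21-u11*u23)*h3
  · linear_combination (-Z) * hU + (u21*u32-u22*u31)*h1 + (u12*u31-u11*u32)*h2 + (u11*u22-u12*u21)*h3

lemma act_val (a b c p q r u11 u12 u13 u21 u22 u23 u31 u32 u33 x y z : ℤ) :
    q3 (q3 a b c p q r u11 u21 u31) (q3 a b c p q r u12 u22 u32) (q3 a b c p q r u13 u23 u33)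
      (pol3 a b c p q r u11 u21 u31 u12 u22 u32) (pol3 a b c p q r u11 u21 u31 u13 u23 u33)
      (pol3 a b c p q r u12 u22 u32 u13 u23 u33) x y z
    = q3 a b c p q r (u11*x+u12*y+u13*z) (u21*x+u22*y+u23*z) (u31*x+u32*y+u33*z) := by
  unfold q3 pol3; ring

lemma act_det (a b c p q r u11 u12 u13 u21 u22 u23 u31 u32 u33 : ℤ) :
    d3 (q3 a b c p q r u11 u21 u31) (q3 a b c p q r u12 u22 u32) (q3 a b c p q r u13 u23 u33)
      (pol3 a b c p q r u11 u21 u31 u12 u22 u32) (pol3 a b c p q r u11 u21 u31 u13 u23 u33)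
      (pol3 a b c p q r u12 u22 u32 u13 u23 u33)
    = (dm u11 u12 u13 u21 u22 u23 u31 u32 u33)^2 * d3 a b c p q r := by
  unfold q3 pol3 d3 dm; ring

set_option maxHeartbeats 1000000 in
theorem tern_det_one (a b c p q r : ℤ)
    (hpd : ∀ x y z : ℤ, ¬(x = 0 ∧ y = 0 ∧ z = 0) → 0 < q3 a b c p q r x y z)
    (hd : d3 a b c p q r = 1) :
    ∃ u v w : ℤ, a = u^2 + v^2 + w^2 := by
  have ha : 0 < a := by
    have := hpd 1 0 0 (by simp); simpa [q3] using this
  -- minimum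
  have hP : ∃ k : ℕ, 0 < k ∧ ∃ x y z : ℤ, ¬(x = 0 ∧ y = 0 ∧ z = 0) ∧
      q3 a b c p q r x y z = (k : ℤ) := by
    refine ⟨a.toNat, by omega, 1, 0, 0, by simp, ?_⟩
    simp [q3]; omega
  obtain ⟨k, ⟨hk0, x, y, z, hxyz0, hxyzv⟩, hkmin⟩ := exists_min hP
  have hmin : ∀ X Y Z : ℤ, ¬(X = 0 ∧ Y = 0 ∧ Z = 0) → (k:ℤ) ≤ q3 a b c p q r X Y Z := by
    intro X Y Z h0
    have hv := hpd X Y Z h0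
    have := hkmin (q3 a b c p q r X Y Z).toNat ⟨by omega, X, Y, Z, h0, by omega⟩
    omega
  -- primitivity
  have hprim : Int.gcd (↑(Int.gcd x y)) z = 1 := by
    set g : ℕ := Int.gcd (↑(Int.gcd x y)) z with hgdef
    have d1 : (g:ℤ) ∣ (↑(Int.gcd x y):ℤ) := Int.gcd_dvd_left (↑(Int.gcd x y)) z
    obtain ⟨x1, hx1⟩ : (g:ℤ) ∣ x := d1.trans (Int.gcd_dvd_left x y)
    obtain ⟨y1, hy1⟩ : (g:ℤ) ∣ y := d1.trans (Int.gcd_dvd_right x y)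
    obtain ⟨z1, hz1⟩ : (g:ℤ) ∣ z := Int.gcd_dvd_right (↑(Int.gcd x y)) z
    have hg0 : g ≠ 0 := by
      intro h0
      obtain ⟨h1, h2⟩ := Int.gcd_eq_zero_iff.mp h0
      obtain ⟨h3, h4⟩ := Int.gcd_eq_zero_iff.mp (by exact_mod_cast h1 : Int.gcd x y = 0)
      exact hxyz0 ⟨h3, h4, h2⟩
    have h10 : ¬(x1 = 0 ∧ y1 = 0 ∧ z1 = 0) := by
      rintro ⟨h1, h2, h3⟩
      rw [h1] at hx1; rw [h2] at hy1; rw [h3] at hz1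
      simp at hx1 hy1 hz1
      exact hxyz0 ⟨hx1, hy1, hz1⟩
    have hval : (k:ℤ) = (g:ℤ)^2 * q3 a b c p q r x1 y1 z1 := by
      rw [← hxyzv, hx1, hy1, hz1]; unfold q3; ring
    have hv1 : (k:ℤ) ≤ q3 a b c p q r x1 y1 z1 := hmin x1 y1 z1 h10
    have hvpos := hpd x1 y1 z1 h10
    by_contra hne
    have hgg : (2:ℤ) ≤ (g:ℤ) := by omega
    have hg4 : (4:ℤ) ≤ (g:ℤ)^2 := by nlinarith [hgg]
    nlinarith [hvpos, hv1, hval, hg4]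
  -- complete to unimodular matrix
  obtain ⟨u12, u13, u22, u23, u32, u33, hU⟩ := ext3_s18 x y z hprim
  -- transformed form F' = (A,B,C,P,Q,R)
  set A := q3 a b c p q r x y z with hA
  set B := q3 a b c p q r u12 u22 u32 with hB
  set C := q3 a b c p q r u13 u23 u33 with hC
  set P := pol3 a b c p q r x y z u12 u22 u32 with hP'
  set Q := pol3 a b c p q r x y z u13 u23 u33 with hQ'
  set R := pol3 a b c p q r u12 u22 u32 u13 u23 u33 with hR'
  have hval' : ∀ X Y Z : ℤ, q3 A B C P Q R X Y Z
      = q3 a b c p q r (x*X+u12*Y+u13*Z) (y*X+u22*Y+u23*Z) (z*X+u32*Y+u33*Z) :=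
    fun X Y Z => act_val a b c p q r x u12 u13 y u22 u23 z u32 u33 X Y Z
  have hd' : d3 A B C P Q R = 1 := by
    have := act_det a b c p q r x u12 u13 y u22 u23 z u32 u33
    rw [hU, hd] at this
    simpa using this
  have himg : ∀ X Y Z : ℤ, ¬(X = 0 ∧ Y = 0 ∧ Z = 0) →
      ¬(x*X+u12*Y+u13*Z = 0 ∧ y*X+u22*Y+u23*Z = 0 ∧ z*X+u32*Y+u33*Z = 0) := by
    rintro X Y Z h0 ⟨h1, h2, h3⟩
    exact h0 (inj3 x u12 u13 y u22 u23 z u32 u33 X Y Z hU h1 h2 h3)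
  have hpd' : ∀ X Y Z : ℤ, ¬(X = 0 ∧ Y = 0 ∧ Z = 0) → 0 < q3 A B C P Q R X Y Z := by
    intro X Y Z h0
    rw [hval']
    exact hpd _ _ _ (himg X Y Z h0)
  have hmin' : ∀ X Y Z : ℤ, ¬(X = 0 ∧ Y = 0 ∧ Z = 0) → A ≤ q3 A B C P Q R X Y Z := by
    intro X Y Z h0
    have h1 := hmin _ _ _ (himg X Y Z h0)
    rw [← hval'] at h1
    linarith [h1, hxyzv.le, hxyzv.ge]
  have hApos : 0 < A := by rw [hxyzv]; exact_mod_cast hk0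
  clear_value A B C P Q R
  clear hA hB hC hP' hQ' hR' himg hmin hpd hkmin hd
  -- split off the binary form
  have id1 : ∀ X Y Z : ℤ, A * q3 A B C P Q R X Y Z
      = (A*X + P*Y + Q*Z)^2 + q2 (A*B-P^2) (A*C-Q^2) (A*R-P*Q) Y Z := by
    intro X Y Z; unfold q3 q2; ring
  have hd2' : d2 (A*B-P^2) (A*C-Q^2) (A*R-P*Q) = A * d3 A B C P Q R := by
    unfold d2 d3; ring
  rw [hd', mul_one] at hd2'
  have hpd2 : ∀ Y Z : ℤ, ¬(Y = 0 ∧ Z = 0) → 0 < q2 (A*B-P^2) (A*C-Q^2) (A*R-P*Q) Y Z := by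
    intro Y Z h0
    have h0' : ¬(-(P*Y+Q*Z) = 0 ∧ A*Y = 0 ∧ A*Z = 0) := by
      rintro ⟨h1, h2, h3⟩
      have hY : Y = 0 := by
        rcases mul_eq_zero.mp h2 with h | h
        · exact absurd h (by omega)
        · exact h
      have hZ : Z = 0 := by
        rcases mul_eq_zero.mp h3 with h | h
        · exact absurd h (by omega)
        · exact h
      exact h0 ⟨hY, hZ⟩
    have hq3 := hpd' (-(P*Y+Q*Z)) (A*Y) (A*Z) h0'
    have hidv := id1 (-(P*Y+Q*Z)) (A*Y) (A*Z)
    have hexp : (A*(-(P*Y+Q*Z)) + P*(A*Y) + Q*(A*Z))^2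
        + q2 (A*B-P^2) (A*C-Q^2) (A*R-P*Q) (A*Y) (A*Z)
        = A^2 * q2 (A*B-P^2) (A*C-Q^2) (A*R-P*Q) Y Z := by unfold q2; ring
    rw [hexp] at hidv
    nlinarith [hq3, hApos, hidv]
  -- Hermite bound gives A = 1
  obtain ⟨y0, z0, hyz0, -, -, hbound⟩ := bin_min_s18 _ _ _ hpd2
  set m0 := q2 (A*B-P^2) (A*C-Q^2) (A*R-P*Q) y0 z0 with hm0
  have hm0pos : 0 < m0 := hpd2 y0 z0 hyz0
  obtain ⟨k0, hr1, hr2⟩ := round_lemma (P*y0 + Q*z0) A hApos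
  have h00 : ¬((-k0) = 0 ∧ y0 = 0 ∧ z0 = 0) := by
    rintro ⟨-, h2, h3⟩; exact hyz0 ⟨h2, h3⟩
  set W := q3 A B C P Q R (-k0) y0 z0 with hWdef
  have hw : A ≤ W := hmin' (-k0) y0 z0 h00
  have hid := id1 (-k0) y0 z0
  rw [← hWdef, ← hm0] at hid
  have hL : A*(-k0) + P*y0 + Q*z0 = (P*y0 + Q*z0) - k0*A := by ring
  rw [hL] at hid
  rw [hd2'] at hbound
  set L := (P*y0 + Q*z0) - k0*A with hLdef
  clear_value W L
  have hA1 : A = 1 := by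
    have h1 : A*A ≤ A*W := by nlinarith [hw, hApos]
    have h2 : 4*L^2 ≤ A^2 := by nlinarith [hr1, hr2]
    have h4 : 3*A^2 ≤ 4*m0 := by nlinarith [h1, h2, hid]
    have h5 : 27*A^4 ≤ 64*A := by nlinarith [h4, hbound, hm0pos, hApos]
    by_contra hne
    have hA2 : 2 ≤ A := by omega
    have hcube : 8 ≤ A^3 := by nlinarith [hA2]
    nlinarith [h5, hApos, hcube, hA2]
  clear hid hw hr1 hr2 hbound hm0pos h00 hyz0 hm0 hWdef hLdef hxyzv
  subst hA1
  simp only [one_mul] at hd2' hpd2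
  obtain ⟨e, f, g2, h2, hbin⟩ := bin_det_one _ _ _ hpd2 hd2'
  -- split identity for the unimodular-transformed form
  have idsplit : ∀ X Y Z : ℤ, q3 1 B C P Q R X Y Z
      = (X + P*Y + Q*Z)^2 + q2 (B-P^2) (C-Q^2) (R-P*Q) Y Z := by
    intro X Y Z; unfold q3 q2; ring
  -- preimage of e1 under U
  unfold dm at hU
  set V1x := u22*u33 - u23*u32 with hV1x
  set V1y := u23*z - y*u33 with hV1y
  set V1z := y*u32 - u22*z with hV1z
  have c1 : x*V1x + u12*V1y + u13*V1z = 1 := by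
    rw [hV1x, hV1y, hV1z]; linear_combination hU
  have c2 : y*V1x + u22*V1y + u23*V1z = 0 := by rw [hV1x, hV1y, hV1z]; ring
  have c3 : z*V1x + u32*V1y + u33*V1z = 0 := by rw [hV1x, hV1y, hV1z]; ring
  have hv := hval' V1x V1y V1z
  rw [c1, c2, c3] at hv
  have haval : q3 a b c p q r 1 0 0 = a := by unfold q3; ring
  rw [haval] at hv
  rw [idsplit, hbin] at hv
  exact ⟨V1x + P*V1y + Q*V1z, e*V1y + f*V1z, g2*V1y + h2*V1z, by linarith [hv]⟩

lemma one_le_sq (z : ℤ) (hz : z ≠ 0) : 1 ≤ z^2 := by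
  rcases hz.lt_or_gt with h | h <;> nlinarith

lemma posdef3_of_minors (a b c p q r : ℤ) (h1 : 0 < a) (h2 : 0 < a*b - p^2)
    (h3 : 0 < d3 a b c p q r) :
    ∀ x y z : ℤ, ¬(x = 0 ∧ y = 0 ∧ z = 0) → 0 < q3 a b c p q r x y z := by
  intro x y z h0
  by_contra hle
  push_neg at hle
  have hprod : (a*b - p^2) * (a * q3 a b c p q r x y z) ≤ 0 :=
    mul_nonpos_of_nonneg_of_nonpos h2.le (mul_nonpos_of_nonneg_of_nonpos h1.le hle)
  have key : (a*b - p^2) * (a * q3 a b c p q r x y z)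
      = (a*b-p^2)*(a*x+p*y+q*z)^2 + ((a*b-p^2)*y + (a*r-p*q)*z)^2
        + (a*(d3 a b c p q r))*z^2 := by
    unfold q3 d3; ring
  have e1 : 0 ≤ (a*b-p^2)*(a*x+p*y+q*z)^2 := mul_nonneg h2.le (sq_nonneg _)
  have e2 : 0 ≤ ((a*b-p^2)*y + (a*r-p*q)*z)^2 := sq_nonneg _
  have e3 : 0 ≤ (a*(d3 a b c p q r))*z^2 := mul_nonneg (mul_pos h1 h3).le (sq_nonneg _)
  have hz : z = 0 := by
    by_contra hz0
    have hz2 := one_le_sq z hz0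
    nlinarith [mul_pos h1 h3]
  subst hz
  have hy : y = 0 := by
    by_contra hy0
    have hy2 := one_le_sq y hy0
    have : ((a*b-p^2)*y + (a*r-p*q)*0)^2 = (a*b-p^2)^2 * y^2 := by ring
    nlinarith [mul_pos h2 h2]
  subst hy
  have hx : x = 0 := by
    by_contra hx0
    have hx2 := one_le_sq x hx0
    have : (a*x+p*0+q*0)^2 = a^2*x^2 := by ring
    nlinarith [mul_pos h1 h1, mul_pos h2 (mul_pos h1 h1)]
  exact h0 ⟨hx, rfl, rfl⟩

lemma sum_three_sq_of_mod_eight (n : ℕ) (hpos : 0 < n) (h5 : n % 8 = 5) :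
    ∃ x y z : ℕ, n = x^2 + y^2 + z^2 := by
  have hn5 : 5 ≤ n := by omega
  have hn4 : n % 4 = 1 := by omega
  have hnodd : Odd n := by rw [Nat.odd_iff]; omega
  haveI : NeZero (4*n) := ⟨by omega⟩
  have hcop : Nat.Coprime (2*n-1) (4*n) := by
    have h1 : Nat.gcd (2*n-1) (4*n) ∣ 2*n-1 := Nat.gcd_dvd_left _ _
    have h2 : Nat.gcd (2*n-1) (4*n) ∣ 4*n := Nat.gcd_dvd_right _ _
    have h3 : Nat.gcd (2*n-1) (4*n) ∣ 2 := by
      have := Nat.dvd_sub h2 (Dvd.dvd.mul_left h1 2)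
      have he : 4*n - 2*(2*n-1) = 2 := by omega
      rwa [he] at this
    rcases (Nat.dvd_prime Nat.prime_two).mp h3 with h | h
    · exact h
    · exfalso; obtain ⟨k, hk⟩ := h ▸ h1; omega
  have hunit : IsUnit ((2*n-1 : ℕ) : ZMod (4*n)) := (ZMod.isUnit_iff_coprime _ _).mpr hcop
  obtain ⟨P, hPgt, hPp, hPmod⟩ := Nat.forall_exists_prime_gt_and_eq_mod hunit (4*n)
  haveI : Fact P.Prime := ⟨hPp⟩
  have hPmod' : P % (4*n) = 2*n-1 := by
    have := (ZMod.natCast_eq_natCast_iff' P (2*n-1) (4*n)).mp hPmod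
    rwa [Nat.mod_eq_of_lt (by omega : 2*n-1 < 4*n)] at this
  have hdm := Nat.div_add_mod P (4*n)
  rw [hPmod'] at hdm
  set t := P / (4*n) with ht
  have hu : 4*(n*t) + (2*n-1) = P := by rw [← hdm]; ring_nf
  have hP4 : P % 4 = 1 := by
    obtain ⟨s, hs⟩ : ∃ s, n = 8*s+5 := ⟨n/8, by omega⟩
    omega
  have hPodd : Odd P := by rw [Nat.odd_iff]; omega
  have hPdvd : P + 1 = n*(4*t+2) := by
    have : n*(4*t+2) = 4*(n*t) + 2*n := by ring
    omega
  have hPn : ¬ P ∣ n := by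
    intro hdvd
    have := Nat.le_of_dvd (by omega) hdvd
    omega
  -- Jacobi symbol: (-n | P) = 1
  have j1 : jacobiSym (-1 : ℤ) P = 1 := by
    rw [jacobiSym.at_neg_one hPodd]; exact ZMod.χ₄_nat_one_mod_four hP4
  have j2 : jacobiSym (n : ℤ) P = jacobiSym (P : ℤ) n :=
    jacobiSym.quadratic_reciprocity_one_mod_four hn4 hPodd
  have j3 : jacobiSym (P : ℤ) n = jacobiSym (-1 : ℤ) n := by
    apply jacobiSym.mod_left'
    have hdvd : ((n:ℤ)) ∣ (-1 - (P:ℤ)) := by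
      have hc : ((P:ℤ)) + 1 = (n:ℤ) * (4*(t:ℤ)+2) := by exact_mod_cast hPdvd
      exact ⟨-(4*(t:ℤ)+2), by linarith⟩
    exact Int.modEq_iff_dvd.mpr hdvd
  have j4 : jacobiSym (-1 : ℤ) n = 1 := by
    rw [jacobiSym.at_neg_one hnodd]; exact ZMod.χ₄_nat_one_mod_four hn4
  have jval : jacobiSym (-(n:ℤ)) P = 1 := by
    have he : (-(n:ℤ)) = (-1) * (n:ℤ) := by ring
    rw [he, jacobiSym.mul_left, j1, j2, j3, j4]; ring
  have hsq : IsSquare ((-(n:ℤ) : ℤ) : ZMod P) := ZMod.isSquare_of_jacobiSym_eq_one jval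
  obtain ⟨u, hu2⟩ := hsq
  have hn0 : ((n:ℕ) : ZMod P) ≠ 0 := by
    rw [Ne, ZMod.natCast_eq_zero_iff]
    exact hPn
  set sZ : ZMod P := u * ((n:ℕ) : ZMod P)⁻¹ with hsZ
  have hu2' : u^2 = -((n:ℕ) : ZMod P) := by
    rw [sq, ← hu2]; push_cast; ring
  have hfield : ((n:ℕ) : ZMod P) * sZ^2 + 1 = 0 := by
    rw [hsZ]
    field_simp
    linear_combination hu2'
  set s : ℤ := (sZ.val : ℤ) with hs
  have hcast : ((n * s^2 + 1 : ℤ) : ZMod P) = 0 := by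
    push_cast
    have hv : ((sZ.val : ℕ) : ZMod P) = sZ := ZMod.natCast_rightInverse sZ
    rw [hs]
    push_cast
    rw [hv]
    exact hfield
  obtain ⟨T, hT⟩ := (ZMod.intCast_zmod_eq_zero_iff_dvd _ P).mp hcast
  have hrr : ((P:ℤ)) + 1 = (n:ℤ) * (4*(t:ℤ)+2) := by exact_mod_cast hPdvd
  set rr : ℤ := 4*(t:ℤ)+2 with hrdef
  -- the ternary form (n, rr, T, 1, 0, s) has determinant 1
  have hdet : d3 (n:ℤ) rr T 1 0 s = 1 := by
    unfold d3
    linear_combination (-T) * hrr - hT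
  have hm2 : (0:ℤ) < (n:ℤ)*rr - 1^2 := by
    have : (n:ℤ)*rr - 1^2 = (P:ℤ) := by linarith [hrr]
    rw [this]; exact_mod_cast hPp.pos
  have hpd := posdef3_of_minors (n:ℤ) rr T 1 0 s (by exact_mod_cast hpos) hm2
    (by rw [hdet]; norm_num)
  obtain ⟨U, V, W, hUVW⟩ := tern_det_one (n:ℤ) rr T 1 0 s hpd hdet
  refine ⟨U.natAbs, V.natAbs, W.natAbs, ?_⟩
  have : ((U.natAbs^2 + V.natAbs^2 + W.natAbs^2 : ℕ) : ℤ) = (n:ℤ) := by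
    push_cast
    rw [sq_abs, sq_abs, sq_abs]
    linarith [hUVW]
  exact_mod_cast this.symm

lemma tri2 (k : ℕ) : 2 * triangular k = k * (k + 1) := by
  have : 2 ∣ k * (k+1) := (Nat.even_mul_succ_self k).two_dvd
  unfold triangular; omega

/-- Every positive integer `n ≡ 5 (mod 8)` is a sum of three or fewer squares,
via explicit identities for `n = 8m + 5`. -/
theorem sum_three_squares_of_mod_eight_five :
    (∀ m x y z : ℕ, m = triangular x + 2 * y ^ 2 + 4 * triangular z →
        8 * m + 5 = (2 * x + 1) ^ 2 + (4 * y) ^ 2 + 4 * (2 * z + 1) ^ 2) ∧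
      (∀ m x y z : ℕ, m = triangular x + 4 * triangular y + 2 * z ^ 2 →
        8 * m + 5 = (2 * x + 1) ^ 2 + (4 * y + 2) ^ 2 + (4 * z) ^ 2) ∧
      (∀ m x z : ℕ, m = triangular x + 4 * triangular z →
        8 * m + 5 = (2 * x + 1) ^ 2 + 4 * (2 * z + 1) ^ 2) ∧
      (∀ n : ℕ, 0 < n → n % 8 = 5 → ∃ x y z : ℕ, n = x ^ 2 + y ^ 2 + z ^ 2) := by
  refine ⟨?_, ?_, ?_, ?_⟩
  · intro m x y z h
    have h1 : (2:ℤ) * triangular x = x*(x+1) := by exact_mod_cast tri2 x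
    have h2 : (2:ℤ) * triangular z = z*(z+1) := by exact_mod_cast tri2 z
    subst h; zify; linear_combination 4*h1 + 16*h2
  · intro m x y z h
    have h1 : (2:ℤ) * triangular x = x*(x+1) := by exact_mod_cast tri2 x
    have h2 : (2:ℤ) * triangular y = y*(y+1) := by exact_mod_cast tri2 y
    subst h; zify; linear_combination 4*h1 + 16*h2
  · intro m x z h
    have h1 : (2:ℤ) * triangular x = x*(x+1) := by exact_mod_cast tri2 x
    have h2 : (2:ℤ) * triangular z = z*(z+1) := by exact_mod_cast tri2 z
    subst h; zify; linear_combination 4*h1 + 16*h2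
  · exact sum_three_sq_of_mod_eight
end
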